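/- arXiv:1006.0605 — 5 statements merged into one kernel-verified Lean document; each statement's English description precedes it below -/
import Mathlib

section
/- Let ρ be an admissible weight on [0,∞). If there exists a set D ⊆ ℕ with bounded gaps such that ∑_{k∈D} ρ(k) converges, then the series ∑_{k=1}^∞ ρ(k) converges. -/
open MeasureTheory Filter Set Topology ENNReal

noncomputable def lowerDensityR (M : Set ℝ) : ℝ :=
  liminf (fun N : ℝ => (volume (M ∩ Set.Icc 0 N)).toReal / N) atTop

open Classical in
noncomputable def lowerDensityN (A : Set ℕ) : ℝ :=
  liminf (fun N : ℕ => (((Finset.range N).filter (fun n => n ∈ A)).card : ℝ) / (N : ℝ)) atTop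

section Defs

variable {𝕜 X : Type*} [NontriviallyNormedField 𝕜]
  [NormedAddCommGroup X] [NormedSpace 𝕜 X]

def IsC0Semigroup (T : ℝ → X →L[𝕜] X) : Prop :=
  T 0 = 1 ∧ (∀ s t : ℝ, 0 ≤ s → 0 ≤ t → T (s + t) = (T s).comp (T t)) ∧
    ∀ x : X, ContinuousOn (fun t => T t x) (Set.Ici 0)

def FreqHypercyclicSemigroup (T : ℝ → X →L[𝕜] X) : Prop :=
  ∃ x : X, ∀ U : Set X, IsOpen U → U.Nonempty →
    0 < lowerDensityR {t : ℝ | 0 ≤ t ∧ T t x ∈ U}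

def FreqHypercyclicOp (S : X →L[𝕜] X) : Prop :=
  ∃ x : X, ∀ U : Set X, IsOpen U → U.Nonempty →
    0 < lowerDensityN {n : ℕ | (S ^ n) x ∈ U}

def HypercyclicOp (S : X →L[𝕜] X) : Prop :=
  ∃ x : X, Dense {y : X | ∃ n : ℕ, (S ^ n) x = y}

def ChaoticOp (S : X →L[𝕜] X) : Prop :=
  HypercyclicOp S ∧ Dense {z : X | ∃ n : ℕ, 1 ≤ n ∧ (S ^ n) z = z}

def HypercyclicSemigroup (T : ℝ → X →L[𝕜] X) : Prop :=
  ∃ x : X, Dense {y : X | ∃ t : ℝ, 0 ≤ t ∧ T t x = y}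

def ChaoticSemigroup (T : ℝ → X →L[𝕜] X) : Prop :=
  HypercyclicSemigroup T ∧ Dense {z : X | ∃ t : ℝ, 0 < t ∧ T t z = z}

end Defs

section Pettis

variable {𝕜 X : Type*} [RCLike 𝕜] [NormedAddCommGroup X] [NormedSpace 𝕜 X]

def PettisIntegrableOnIci (𝕜 : Type*) {X : Type*} [RCLike 𝕜] [NormedAddCommGroup X]
    [NormedSpace 𝕜 X] (f : ℝ → X) : Prop :=
  (∀ φ : StrongDual 𝕜 X, IntegrableOn (fun t => φ (f t)) (Set.Ici 0)) ∧
  ∀ E : Set ℝ, MeasurableSet E → E ⊆ Set.Ici 0 →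
    ∃ xE : X, ∀ φ : StrongDual 𝕜 X, φ xE = ∫ t in E, φ (f t)

def SatisfiesFHCSemigroup (T : ℝ → X →L[𝕜] X) : Prop :=
  ∃ X0 : Set X, Dense X0 ∧ ∃ S : ℝ → X → X,
    (∀ x ∈ X0, ∀ t : ℝ, 0 < t → T t (S t x) = x) ∧
    (∀ x ∈ X0, ∀ r t : ℝ, 0 < t → t < r → T t (S r x) = S (r - t) x) ∧
    (∀ x ∈ X0, PettisIntegrableOnIci 𝕜 (fun t => T t x)) ∧
    (∀ x ∈ X0, PettisIntegrableOnIci 𝕜 (fun t => S t x))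

end Pettis

def AdmissibleWeight (ρ : ℝ → ℝ) : Prop :=
  Measurable ρ ∧ (∀ t : ℝ, 0 ≤ t → 0 < ρ t) ∧
    ∃ M : ℝ, 1 ≤ M ∧ ∃ ω : ℝ, ∀ τ : ℝ, 0 ≤ τ → ∀ t : ℝ, 0 < t →
      ρ τ ≤ M * Real.exp (ω * t) * ρ (τ + t)

def BoundedGapsSet (D : Set ℕ) : Prop :=
  ∃ M : ℕ, 0 < M ∧ ∀ n : ℕ, (D ∩ Set.Icc n (n + M)).Nonempty

noncomputable def weightedMeasure (ρ : ℝ → ℝ) : Measure ℝ :=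
  (volume.restrict (Set.Ici 0)).withDensity (fun t => ENNReal.ofReal (ρ t))

def InGenerator {X : Type*} [NormedAddCommGroup X] [NormedSpace ℂ X]
    (T : ℝ → X →L[ℂ] X) (x y : X) : Prop :=
  Tendsto (fun h : ℝ => h⁻¹ • (T h x - x)) (𝓝[>] (0 : ℝ)) (𝓝 y)


theorem statement10 (ρ : ℝ → ℝ) (hρ : AdmissibleWeight ρ)
    (D : Set ℕ) (hD : BoundedGapsSet D)
    (h : Summable (fun k : D => ρ ((k : ℕ) : ℝ))) :
    Summable (fun k : ℕ => ρ ((k : ℝ) + 1)) := by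
  classical
  obtain ⟨-, hpos, M, hM1, ω, hadm⟩ := hρ
  obtain ⟨M₀, hM₀pos, hgap⟩ := hD
  have hchoice : ∀ k : ℕ, ∃ j : ℕ, j ∈ D ∧ k + 2 ≤ j ∧ j ≤ k + 2 + M₀ := by
    intro k
    obtain ⟨j, hj1, hj2⟩ := hgap (k + 2)
    exact ⟨j, hj1, hj2.1, hj2.2⟩
  choose d hdD hd1 hd2 using hchoice
  set f : ℕ → ℝ := fun n => ρ (n : ℝ) with hf
  set g : ℕ → ℝ := D.indicator f with hg
  have hgsum : Summable g := by
    rw [← summable_subtype_iff_indicator]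
    exact h
  have hgnn : ∀ n, 0 ≤ g n := by
    intro n
    by_cases hn : n ∈ D
    · rw [hg, Set.indicator_of_mem hn]
      exact (hpos _ (by positivity)).le
    · simp [hg, hn]
  set C : ℝ := M * Real.exp (|ω| * (M₀ + 1)) with hC
  have hCnn : 0 ≤ C := by positivity
  have hpoint : ∀ k : ℕ, ρ ((k : ℝ) + 1) ≤ C * ρ ((d k : ℝ)) := by
    intro k
    have htpos : (0 : ℝ) < (d k : ℝ) - ((k : ℝ) + 1) := by
      have := hd1 k
      have : (k : ℝ) + 2 ≤ (d k : ℝ) := by exact_mod_cast this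
      linarith
    have htle : (d k : ℝ) - ((k : ℝ) + 1) ≤ (M₀ : ℝ) + 1 := by
      have := hd2 k
      have : (d k : ℝ) ≤ (k : ℝ) + 2 + (M₀ : ℝ) := by exact_mod_cast this
      linarith
    have h1 := hadm ((k : ℝ) + 1) (by positivity) _ htpos
    have h2 : (k : ℝ) + 1 + ((d k : ℝ) - ((k : ℝ) + 1)) = (d k : ℝ) := by ring
    rw [h2] at h1
    refine h1.trans ?_
    have hρd : 0 ≤ ρ ((d k : ℝ)) := (hpos _ (by positivity)).le
    have hexp : Real.exp (ω * ((d k : ℝ) - ((k : ℝ) + 1))) ≤ Real.exp (|ω| * ((M₀ : ℝ) + 1)) := by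
      apply Real.exp_le_exp.mpr
      calc ω * ((d k : ℝ) - ((k : ℝ) + 1)) ≤ |ω| * ((d k : ℝ) - ((k : ℝ) + 1)) := by
            exact mul_le_mul_of_nonneg_right (le_abs_self ω) htpos.le
        _ ≤ |ω| * ((M₀ : ℝ) + 1) := by
            exact mul_le_mul_of_nonneg_left htle (abs_nonneg ω)
    have : M * Real.exp (ω * ((d k : ℝ) - ((k : ℝ) + 1))) ≤ C := by
      rw [hC]
      exact mul_le_mul_of_nonneg_left hexp (by linarith)
    exact mul_le_mul_of_nonneg_right this hρd
  apply summable_of_sum_range_le (c := C * (((M₀ : ℝ) + 1) * ∑' n, g n))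
  · intro n
    exact (hpos _ (by positivity)).le
  · intro N
    have step1 : ∑ k ∈ Finset.range N, ρ ((k : ℝ) + 1)
        ≤ C * ∑ k ∈ Finset.range N, ρ ((d k : ℝ)) := by
      rw [Finset.mul_sum]
      exact Finset.sum_le_sum fun k _ => hpoint k
    refine step1.trans ?_
    apply mul_le_mul_of_nonneg_left ?_ hCnn
    -- group by fibers of d
    have hmaps : ∀ k ∈ Finset.range N, d k ∈ (Finset.range N).image d := by
      intro k hk; exact Finset.mem_image_of_mem d hk
    rw [← Finset.sum_fiberwise_of_maps_to hmaps (fun k => ρ ((d k : ℝ)))]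
    have inner : ∀ j ∈ (Finset.range N).image d,
        ∑ k ∈ (Finset.range N).filter (fun k => d k = j), ρ ((d k : ℝ))
          ≤ ((M₀ : ℝ) + 1) * g j := by
      intro j hj
      obtain ⟨k₀, _, hk₀⟩ := Finset.mem_image.mp hj
      have hjD : j ∈ D := hk₀ ▸ hdD k₀
      have hsum_eq : ∑ k ∈ (Finset.range N).filter (fun k => d k = j), ρ ((d k : ℝ))
          = (((Finset.range N).filter (fun k => d k = j)).card : ℝ) * ρ ((j : ℝ)) := by
        rw [Finset.sum_congr rfl (fun k hk => by
          rw [(Finset.mem_filter.mp hk).2]), Finset.sum_const, nsmul_eq_mul]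
      rw [hsum_eq]
      have hcard : ((Finset.range N).filter (fun k => d k = j)).card ≤ M₀ + 1 := by
        have hsub : (Finset.range N).filter (fun k => d k = j) ⊆
            Finset.Icc (j - 2 - M₀) (j - 2) := by
          intro k hk
          obtain ⟨-, hdk⟩ := Finset.mem_filter.mp hk
          have h1 := hd1 k
          have h2 := hd2 k
          rw [hdk] at h1 h2
          simp only [Finset.mem_Icc]
          omega
        calc ((Finset.range N).filter (fun k => d k = j)).card
            ≤ (Finset.Icc (j - 2 - M₀) (j - 2)).card := Finset.card_le_card hsub
          _ = j - 2 + 1 - (j - 2 - M₀) := Nat.card_Icc _ _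
          _ ≤ M₀ + 1 := by omega
      have hgj : g j = ρ ((j : ℝ)) := by simp [hg, hjD, hf]
      rw [hgj]
      apply mul_le_mul_of_nonneg_right _ (hpos _ (by positivity)).le
      exact_mod_cast hcard
    refine (Finset.sum_le_sum inner).trans ?_
    rw [← Finset.mul_sum]
    apply mul_le_mul_of_nonneg_left ?_ (by positivity)
    exact Summable.sum_le_tsum _ (fun n _ => hgnn n) hgsum
end

section
/- Let ρ be an admissible weight on [0,∞). Then ρ is bounded on [0,∞) if and only if there exists a set D ⊆ ℕ with bounded gaps such that ρ is bounded on D. -/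
open MeasureTheory Filter Set Topology ENNReal

theorem statement11 (ρ : ℝ → ℝ) (hρ : AdmissibleWeight ρ) :
    (∃ C : ℝ, ∀ t : ℝ, 0 ≤ t → ρ t ≤ C) ↔
      ∃ D : Set ℕ, BoundedGapsSet D ∧ ∃ C : ℝ, ∀ k ∈ D, ρ ((k : ℕ) : ℝ) ≤ C := by
  constructor
  · rintro ⟨C, hC⟩
    exact ⟨Set.univ, ⟨1, one_pos, fun n => ⟨n, trivial, le_refl n, Nat.le_add_right n 1⟩⟩,
      C, fun k _ => hC k (Nat.cast_nonneg k)⟩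
  · rintro ⟨D, ⟨M, hM, hgap⟩, C, hC⟩
    obtain ⟨-, hpos, M', hM', ω, hw⟩ := hρ
    refine ⟨M' * Real.exp (|ω| * (M + 1)) * C, fun t ht => ?_⟩
    obtain ⟨k, hkD, hk1, hk2⟩ := hgap (⌊t⌋₊ + 1)
    have htk : t < (k : ℝ) := by
      have h1 : t < (⌊t⌋₊ : ℝ) + 1 := Nat.lt_floor_add_one t
      calc t < (⌊t⌋₊ : ℝ) + 1 := h1
        _ ≤ (k : ℝ) := by exact_mod_cast hk1
    have hs : 0 < (k : ℝ) - t := by linarith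
    have hkt : t + ((k : ℝ) - t) = (k : ℝ) := by ring
    have key := hw t ht ((k : ℝ) - t) hs
    rw [hkt] at key
    have hsle : (k : ℝ) - t ≤ (M : ℝ) + 1 := by
      have h2 : (k : ℝ) ≤ (⌊t⌋₊ : ℝ) + 1 + M := by exact_mod_cast hk2
      have h3 : (⌊t⌋₊ : ℝ) ≤ t := Nat.floor_le ht
      linarith
    have hexp : Real.exp (ω * ((k : ℝ) - t)) ≤ Real.exp (|ω| * (M + 1)) := by
      apply Real.exp_le_exp.2
      calc ω * ((k : ℝ) - t) ≤ |ω| * ((k : ℝ) - t) :=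
            mul_le_mul_of_nonneg_right (le_abs_self ω) hs.le
        _ ≤ |ω| * (M + 1) := mul_le_mul_of_nonneg_left hsle (abs_nonneg ω)
    have hρk : ρ (k : ℝ) ≤ C := hC k hkD
    have hρkpos : 0 < ρ (k : ℝ) := hpos _ (Nat.cast_nonneg k)
    have hM'0 : (0 : ℝ) ≤ M' := by linarith
    calc ρ t ≤ M' * Real.exp (ω * ((k : ℝ) - t)) * ρ (k : ℝ) := key
      _ ≤ M' * Real.exp (|ω| * (M + 1)) * C := by
          apply mul_le_mul
          · exact mul_le_mul_of_nonneg_left hexp hM'0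
          · exact hρk
          · exact hρkpos.le
          · positivity
end

section
/- Let ρ be an admissible weight on [0,∞) with ∫_0^∞ ρ(s) ds < ∞, and let (T_t)_{t≥0} be the translation semigroup on C_0^ρ([0,∞)). Then (T_t)_{t≥0} satisfies the Frequent Hypercyclicity Criterion for semigroups, i.e., there exist a dense subset X_0 of C_0^ρ([0,∞)) and maps S_t : X_0 → C_0^ρ([0,∞)) for t > 0 such that (i) T_t S_t f = f for all f ∈ X_0, t > 0, and T_t S_r f = S_{r−t} f for all f ∈ X_0, r > t > 0; (ii) t ↦ T_t f is Pettis integrable on [0,∞) for all f ∈ X_0; (iii) t ↦ S_t f is Pettis integrable on [0,∞) for all f ∈ X_0. -/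
open MeasureTheory Filter Set Topology ENNReal

theorem statement13 {X : Type*} [NormedAddCommGroup X] [NormedSpace ℝ X] [CompleteSpace X]
    (ρ : ℝ → ℝ) (hρ : AdmissibleWeight ρ) (hint : IntegrableOn ρ (Set.Ici 0) volume)
    (e : X →ₗ[ℝ] ℝ → ℝ)
    (hinj : ∀ x y : X, (∀ t : ℝ, 0 ≤ t → e x t = e y t) → x = y)
    (hrange : ∀ u : ℝ → ℝ,
      (ContinuousOn u (Set.Ici 0) ∧ Tendsto (fun t => u t * ρ t) atTop (𝓝 0)) ↔
        ∃ x : X, ∀ t : ℝ, 0 ≤ t → e x t = u t)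
    (hnorm : ∀ x : X, ‖x‖ = ⨆ t : Set.Ici (0 : ℝ), |e x t| * ρ t)
    (T : ℝ → X →L[ℝ] X) (hT : IsC0Semigroup T)
    (htrans : ∀ t : ℝ, 0 ≤ t → ∀ x : X, ∀ s : ℝ, 0 ≤ s → e (T t x) s = e x (s + t)) :
    SatisfiesFHCSemigroup T := by
  classical
  obtain ⟨hmeas, hpos, M, hM1, ω, hadm⟩ := hρ
  haveI : Nonempty (Set.Ici (0:ℝ)) := ⟨⟨0, Set.self_mem_Ici⟩⟩
  have hρnn : ∀ s : ℝ, 0 ≤ s → 0 ≤ ρ s := fun s hs => (hpos s hs).le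
  have hkey : ∀ s r : ℝ, 0 ≤ s → s ≤ r → ρ s ≤ M * Real.exp (|ω| * (r - s)) * ρ r := by
    intro s r hs hsr
    rcases eq_or_lt_of_le hsr with h | h
    · subst h
      have h1 : (1:ℝ) ≤ Real.exp (|ω| * (s - s)) := by simp
      have hME : (1:ℝ) ≤ M * Real.exp (|ω| * (s - s)) := by nlinarith
      nlinarith [hpos s hs, mul_le_mul_of_nonneg_right hME (hρnn s hs)]
    · have h2 := hadm s hs (r - s) (by linarith)
      rw [add_sub_cancel] at h2
      refine h2.trans ?_
      have h3 : Real.exp (ω * (r - s)) ≤ Real.exp (|ω| * (r - s)) :=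
        Real.exp_le_exp.mpr (mul_le_mul_of_nonneg_right (le_abs_self ω) (by linarith))
      exact mul_le_mul_of_nonneg_right (mul_le_mul_of_nonneg_left h3 (by linarith))
        ((hpos r (hs.trans hsr)).le)
  have hprops : ∀ x : X, ContinuousOn (e x) (Set.Ici 0) ∧
      Tendsto (fun t => e x t * ρ t) atTop (𝓝 0) :=
    fun x => (hrange (e x)).mpr ⟨x, fun _ _ => rfl⟩
  have hnorm_le : ∀ (x : X) (B : ℝ), (∀ t : ℝ, 0 ≤ t → |e x t| * ρ t ≤ B) → ‖x‖ ≤ B := by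
    intro x B h
    rw [hnorm]
    exact ciSup_le fun t => h t t.2
  set X0 : Set X := {x : X | ∃ K : ℝ, 0 ≤ K ∧ ∀ t : ℝ, K ≤ t → e x t = 0} with hX0def
  have hχcont : Continuous fun v : ℝ => min 1 (max (v + 1) 0) :=
    continuous_const.min ((continuous_id.add continuous_const).max continuous_const)
  have hΦcont : ∀ (x : X), Continuous fun v : ℝ => e x (max v 0) * min 1 (max (v + 1) 0) := by
    intro x
    have h1 : Continuous fun v : ℝ => max v 0 := continuous_id.max continuous_const
    have h2 : Continuous fun v : ℝ => e x (max v 0) :=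
      (hprops x).1.comp_continuous h1 fun v => Set.mem_Ici.mpr (le_max_right _ _)
    exact h2.mul hχcont
  have hcond : ∀ (t : ℝ) (x : X), x ∈ X0 →
      ContinuousOn (fun s => e x (max (s - t) 0) * min 1 (max (s - t + 1) 0)) (Set.Ici 0) ∧
      Tendsto (fun s => (e x (max (s - t) 0) * min 1 (max (s - t + 1) 0)) * ρ s) atTop (𝓝 0) := by
    intro t x hx
    obtain ⟨K, hK0, hKz⟩ := hx
    constructor
    · exact ((hΦcont x).comp (continuous_id.sub continuous_const)).continuousOn
    · apply tendsto_const_nhds.congr'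
      filter_upwards [eventually_ge_atTop (t + K)] with s hs
      have h1 : max (s - t) 0 = s - t := max_eq_left (by linarith)
      have h2 : e x (s - t) = 0 := hKz _ (by linarith)
      rw [h1, h2, zero_mul, zero_mul]
  set S : ℝ → X → X := fun t x =>
    if h : ContinuousOn (fun s => e x (max (s - t) 0) * min 1 (max (s - t + 1) 0)) (Set.Ici 0) ∧
        Tendsto (fun s => (e x (max (s - t) 0) * min 1 (max (s - t + 1) 0)) * ρ s) atTop (𝓝 0)
    then ((hrange (fun s => e x (max (s - t) 0) * min 1 (max (s - t + 1) 0))).mp h).choose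
    else 0 with hSdef
  have hSspec : ∀ (t : ℝ) (x : X), x ∈ X0 → ∀ s : ℝ, 0 ≤ s →
      e (S t x) s = e x (max (s - t) 0) * min 1 (max (s - t + 1) 0) := by
    intro t x hx s hs
    have h := hcond t x hx
    rw [hSdef]
    simp only
    rw [dif_pos h]
    exact (((hrange _).mp h).choose_spec) s hs
  -- density
  have hdense : Dense X0 := by
    rw [Metric.dense_iff]
    intro x ε hε
    obtain ⟨hc, h0⟩ := hprops x
    obtain ⟨N, hN⟩ := (Metric.tendsto_atTop.mp h0) (ε / 2) (by positivity)
    set N' : ℝ := max N 0 with hN'def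
    have hN'0 : (0:ℝ) ≤ N' := le_max_right _ _
    have hvc : ContinuousOn (fun t => e x t * min 1 (max (N' + 1 - t) 0)) (Set.Ici 0) :=
      hc.mul (continuous_const.min
        ((continuous_const.sub continuous_id).max continuous_const)).continuousOn
    have hvz : ∀ t : ℝ, N' + 1 ≤ t → e x t * min 1 (max (N' + 1 - t) 0) = 0 := by
      intro t ht
      have h1 : max (N' + 1 - t) 0 = 0 := max_eq_right (by linarith)
      rw [h1]
      simp
    have hvt : Tendsto (fun t => (e x t * min 1 (max (N' + 1 - t) 0)) * ρ t) atTop (𝓝 0) := by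
      apply tendsto_const_nhds.congr'
      filter_upwards [eventually_ge_atTop (N' + 1)] with t ht
      rw [hvz t ht, zero_mul]
    obtain ⟨y, hy⟩ := (hrange (fun t => e x t * min 1 (max (N' + 1 - t) 0))).mp ⟨hvc, hvt⟩
    refine ⟨y, Metric.mem_ball.mpr ?_, ⟨N' + 1, by linarith, fun t ht => ?_⟩⟩
    · rw [dist_eq_norm]
      have hb : ‖y - x‖ ≤ ε / 2 := by
        apply hnorm_le
        intro t ht
        have hey : e (y - x) t = e x t * min 1 (max (N' + 1 - t) 0) - e x t := by
          rw [map_sub, Pi.sub_apply, hy t ht]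
        rw [hey]
        rcases le_total t N' with h | h
        · have h1 : min 1 (max (N' + 1 - t) 0) = 1 :=
            min_eq_left (le_trans (by linarith) (le_max_left _ _))
          rw [h1, mul_one, sub_self, abs_zero, zero_mul]
          positivity
        · have h2 := hN t (le_trans (le_max_left N 0) h)
          rw [Real.dist_eq, sub_zero] at h2
          have h3 : (0:ℝ) ≤ min 1 (max (N' + 1 - t) 0) :=
            le_min (by norm_num) (le_max_right _ _)
          have h4 : min 1 (max (N' + 1 - t) 0) ≤ 1 := min_le_left _ _
          have h5 : |e x t * min 1 (max (N' + 1 - t) 0) - e x t| ≤ |e x t| := by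
            rw [show e x t * min 1 (max (N' + 1 - t) 0) - e x t
                = e x t * (min 1 (max (N' + 1 - t) 0) - 1) by ring, abs_mul]
            have : |min 1 (max (N' + 1 - t) 0) - 1| ≤ 1 := by
              rw [abs_le]; constructor <;> linarith
            nlinarith [abs_nonneg (e x t)]
          have h6 : |e x t| * ρ t ≤ ε / 2 := by
            have := abs_mul (e x t) (ρ t)
            have h7 : |e x t * ρ t| ≤ ε / 2 := le_of_lt h2
            rw [abs_mul, abs_of_nonneg (hρnn t ht)] at h7
            exact h7
          have := hρnn t ht
          nlinarith [abs_nonneg (e x t * min 1 (max (N' + 1 - t) 0) - e x t)]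
      linarith
    · rw [hy t (by linarith)]
      exact hvz t ht
  -- right inverse
  have hTS : ∀ x ∈ X0, ∀ t : ℝ, 0 < t → T t (S t x) = x := by
    intro x hx t ht
    apply hinj
    intro s hs
    rw [htrans t ht.le _ s hs, hSspec t x hx (s + t) (by linarith)]
    rw [add_sub_cancel_right]
    rw [max_eq_left hs, min_eq_left (le_trans (by linarith) (le_max_left _ _)), mul_one]
  have hTSr : ∀ x ∈ X0, ∀ r t : ℝ, 0 < t → t < r → T t (S r x) = S (r - t) x := by
    intro x hx r t ht htr
    apply hinj
    intro s hs
    rw [htrans t ht.le _ s hs, hSspec r x hx (s + t) (by linarith),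
      hSspec (r - t) x hx s hs, show s + t - r = s - (r - t) by ring]
  -- Pettis from Bochner
  have pettis_of : ∀ f : ℝ → X, IntegrableOn f (Set.Ici 0) volume →
      PettisIntegrableOnIci ℝ f := by
    intro f hf
    refine ⟨?_, ?_⟩
    · intro φ
      exact ContinuousLinearMap.integrable_comp φ hf
    · intro E hE hE0
      exact ⟨∫ t in E, f t, fun φ =>
        (ContinuousLinearMap.integral_comp_comm φ (hf.mono_set hE0)).symm⟩
  -- integrability of T-orbits
  have hTint : ∀ x ∈ X0, IntegrableOn (fun t => T t x) (Set.Ici 0) volume := by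
    intro x hx
    obtain ⟨K, hK0, hKz⟩ := hx
    have hTz : ∀ t : ℝ, K ≤ t → T t x = 0 := by
      intro t ht
      apply hinj
      intro s hs
      rw [htrans t (le_trans hK0 ht) x s hs, hKz _ (by linarith), map_zero]
      rfl
    have h1 : IntegrableOn (fun t => T t x) (Set.Icc 0 K) volume :=
      ((hT.2.2 x).mono Set.Icc_subset_Ici_self).integrableOn_Icc
    have h2 : IntegrableOn (fun t => T t x) (Set.Ici K) volume := by
      exact (integrableOn_congr_fun (g := fun _ => (0:X)) (s := Set.Ici K)
        (fun t ht => hTz t ht) measurableSet_Ici).mpr integrableOn_zero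
    exact (h1.union h2).mono_set fun t ht =>
      (le_or_gt t K).elim (fun h => Or.inl ⟨ht, h⟩) fun h => Or.inr h.le
  -- integrability of S-orbits
  have hSint : ∀ x ∈ X0, IntegrableOn (fun t => S t x) (Set.Ici 0) volume := by
    intro x hx
    obtain ⟨K, hK0, hKz⟩ := hx
    have hxX0 : x ∈ X0 := ⟨K, hK0, hKz⟩
    set Φ : ℝ → ℝ := fun v => e x (max v 0) * min 1 (max (v + 1) 0) with hΦdef
    have hΦc : Continuous Φ := hΦcont x
    have hΦz : ∀ v : ℝ, v ∉ Set.Icc (-1 : ℝ) K → Φ v = 0 := by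
      intro v hv
      rw [Set.mem_Icc, not_and_or] at hv
      rcases hv with hv | hv
      · push_neg at hv
        have h1 : max (v + 1) 0 = 0 := max_eq_right (by linarith)
        show e x (max v 0) * min 1 (max (v + 1) 0) = 0
        rw [h1]
        simp
      · push_neg at hv
        have h1 : max v 0 = v := max_eq_left (by linarith)
        show e x (max v 0) * min 1 (max (v + 1) 0) = 0
        rw [h1, hKz v hv.le, zero_mul]
    have hΦuc : UniformContinuous Φ :=
      (HasCompactSupport.intro isCompact_Icc hΦz).uniformContinuous_of_continuous hΦc
    have hgΦ : ∀ (t s : ℝ), 0 ≤ s → e (S t x) s = Φ (s - t) :=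
      fun t s hs => hSspec t x hxX0 s hs
    have hScont : Continuous fun t => S t x := by
      rw [Metric.continuous_iff]
      intro t0 ε hε
      set R : ℝ := |t0| + K + 2 with hRdef
      have hR0 : (0:ℝ) ≤ R := by positivity
      set C : ℝ := M * Real.exp (|ω| * R) * ρ R with hCdef
      have hC0 : 0 < C :=
        mul_pos (mul_pos (by linarith) (Real.exp_pos _)) (hpos R hR0)
      obtain ⟨δ, hδ0, hδ⟩ := Metric.uniformContinuous_iff.mp hΦuc (ε / (2 * C)) (by positivity)
      refine ⟨min δ 1, by positivity, fun t hdist => ?_⟩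
      rw [dist_eq_norm]
      have htt0 : |t - t0| < min δ 1 := by rwa [Real.dist_eq] at hdist
      have htt1 : t - t0 < 1 := (abs_lt.mp (lt_of_lt_of_le htt0 (min_le_right δ 1))).2
      have hb : ‖S t x - S t0 x‖ ≤ ε / 2 := by
        apply hnorm_le
        intro s hs
        have hes : e (S t x - S t0 x) s = Φ (s - t) - Φ (s - t0) := by
          rw [map_sub, Pi.sub_apply, hgΦ t s hs, hgΦ t0 s hs]
        rw [hes]
        rcases le_or_gt s R with hsR | hsR
        · have h1 : |Φ (s - t) - Φ (s - t0)| ≤ ε / (2 * C) := by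
            have h2 : dist (Φ (s - t)) (Φ (s - t0)) < ε / (2 * C) := by
              apply hδ
              rw [Real.dist_eq, show s - t - (s - t0) = -(t - t0) by ring, abs_neg]
              exact lt_of_lt_of_le htt0 (min_le_left _ _)
            rw [Real.dist_eq] at h2
            linarith
          have h2 : ρ s ≤ C := by
            refine (hkey s R hs hsR).trans ?_
            rw [hCdef]
            have h3 : Real.exp (|ω| * (R - s)) ≤ Real.exp (|ω| * R) :=
              Real.exp_le_exp.mpr (mul_le_mul_of_nonneg_left (by linarith) (abs_nonneg ω))
            exact mul_le_mul_of_nonneg_right (mul_le_mul_of_nonneg_left h3 (by linarith))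
              (hρnn R hR0)
          calc |Φ (s - t) - Φ (s - t0)| * ρ s ≤ (ε / (2 * C)) * C :=
              mul_le_mul h1 h2 (hρnn s hs) (by positivity)
            _ = ε / 2 := by field_simp
        · have hzt : Φ (s - t) = 0 := by
            apply hΦz
            rw [Set.mem_Icc]
            push_neg
            intro _
            have := le_abs_self t0
            rw [hRdef] at hsR
            linarith
          have hzt0 : Φ (s - t0) = 0 := by
            apply hΦz
            rw [Set.mem_Icc]
            push_neg
            intro _
            have := le_abs_self t0
            rw [hRdef] at hsR
            linarith
          rw [hzt, hzt0, sub_zero, abs_zero, zero_mul]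
          positivity
      linarith
    obtain ⟨C0, hC0b⟩ := (isCompact_Icc (a := (0:ℝ)) (b := K)).exists_bound_of_continuousOn
      ((hprops x).1.mono fun r hr => hr.1)
    have hC0nn : (0:ℝ) ≤ C0 :=
      le_trans (norm_nonneg _) (hC0b 0 ⟨le_refl 0, hK0⟩)
    set D : ℝ := C0 * (M * Real.exp (|ω| * (K + 2))) with hDdef
    have hDnn : 0 ≤ D :=
      mul_nonneg hC0nn (mul_nonneg (by linarith) (Real.exp_pos _).le)
    have hbound : ∀ t : ℝ, 0 ≤ t → ‖S t x‖ ≤ D * ρ (t + (K + 1)) := by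
      intro t ht
      have hρR : 0 < ρ (t + (K + 1)) := hpos _ (by linarith)
      apply hnorm_le
      intro s hs
      rw [hgΦ t s hs]
      by_cases h1 : s - t + 1 ≤ 0
      · have h2 : Φ (s - t) = 0 := by
          show e x (max (s - t) 0) * min 1 (max (s - t + 1) 0) = 0
          rw [max_eq_right h1, min_eq_right zero_le_one, mul_zero]
        rw [h2, abs_zero, zero_mul]
        positivity
      by_cases h2 : K ≤ s - t
      · have h3 : Φ (s - t) = 0 := by
          show e x (max (s - t) 0) * min 1 (max (s - t + 1) 0) = 0
          rw [max_eq_left (by linarith), hKz _ h2, zero_mul]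
        rw [h3, abs_zero, zero_mul]
        positivity
      push_neg at h1 h2
      have hΦle : |Φ (s - t)| ≤ C0 := by
        have ha : max (s - t) 0 ∈ Set.Icc (0:ℝ) K :=
          ⟨le_max_right _ _, max_le h2.le hK0⟩
        have hb1 : |e x (max (s - t) 0)| ≤ C0 := hC0b _ ha
        have hb2 : |min 1 (max (s - t + 1) 0)| ≤ 1 := by
          rw [abs_of_nonneg (le_min (by norm_num) (le_max_right _ _))]
          exact min_le_left _ _
        calc |Φ (s - t)| = |e x (max (s - t) 0)| * |min 1 (max (s - t + 1) 0)| := abs_mul _ _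
          _ ≤ C0 * 1 := mul_le_mul hb1 hb2 (abs_nonneg _) hC0nn
          _ = C0 := mul_one _
      have hρs : ρ s ≤ M * Real.exp (|ω| * (K + 2)) * ρ (t + (K + 1)) := by
        have h3 : s ≤ t + (K + 1) := by linarith
        refine (hkey s (t + (K + 1)) hs h3).trans ?_
        have h4 : Real.exp (|ω| * (t + (K + 1) - s)) ≤ Real.exp (|ω| * (K + 2)) :=
          Real.exp_le_exp.mpr (mul_le_mul_of_nonneg_left (by linarith) (abs_nonneg ω))
        exact mul_le_mul_of_nonneg_right (mul_le_mul_of_nonneg_left h4 (by linarith)) hρR.le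
      calc |Φ (s - t)| * ρ s ≤ C0 * ρ s :=
          mul_le_mul_of_nonneg_right hΦle (hρnn s hs)
        _ ≤ C0 * (M * Real.exp (|ω| * (K + 2)) * ρ (t + (K + 1))) :=
          mul_le_mul_of_nonneg_left hρs hC0nn
        _ = D * ρ (t + (K + 1)) := by rw [hDdef]; ring
    have hmaj : IntegrableOn (fun t => D * ρ (t + (K + 1))) (Set.Ici 0) volume := by
      apply Integrable.const_mul
      have h1 : IntegrableOn ρ (Set.Ici (K + 1)) volume :=
        hint.mono_set (Set.Ici_subset_Ici.mpr (by linarith))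
      have h2 : Integrable ((Set.Ici (K + 1)).indicator ρ) volume :=
        (integrable_indicator_iff measurableSet_Ici).mpr h1
      have h3 : Integrable (((Set.Ici (K + 1)).indicator ρ) ∘ fun t => t + (K + 1)) volume := by
        rw [(measurePreserving_add_right volume (K + 1)).integrable_comp_emb
          (measurableEmbedding_addRight (K + 1))]
        exact h2
      have h4 : (((Set.Ici (K + 1)).indicator ρ) ∘ fun t => t + (K + 1)) =
          (Set.Ici (0:ℝ)).indicator fun t => ρ (t + (K + 1)) := by
        funext t
        by_cases h : (0:ℝ) ≤ t
        · rw [Function.comp_apply,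
            Set.indicator_of_mem (show t + (K + 1) ∈ Set.Ici (K + 1) by
              rw [Set.mem_Ici]; linarith) ρ,
            Set.indicator_of_mem (show t ∈ Set.Ici (0:ℝ) from Set.mem_Ici.mpr h)
              (fun t => ρ (t + (K + 1)))]
        · rw [Function.comp_apply,
            Set.indicator_of_notMem (show t + (K + 1) ∉ Set.Ici (K + 1) by
              rw [Set.mem_Ici]; push_neg at h ⊢; linarith) ρ,
            Set.indicator_of_notMem (show t ∉ Set.Ici (0:ℝ) by
              rw [Set.mem_Ici]; exact h) (fun t => ρ (t + (K + 1)))]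
      rw [h4] at h3
      exact (integrable_indicator_iff measurableSet_Ici).mp h3
    refine Integrable.mono' hmaj hScont.aestronglyMeasurable ?_
    rw [ae_restrict_iff' measurableSet_Ici]
    exact ae_of_all _ fun t ht => hbound t ht
  exact ⟨X0, hdense, S, hTS, hTSr, fun x hx => pettis_of _ (hTint x hx),
    fun x hx => pettis_of _ (hSint x hx)⟩
end

section
/- Let ρ be an admissible weight on [0,∞), 1 ≤ p < ∞, and let (T_t)_{t≥0} be the translation semigroup on L^p_ρ([0,∞)). If (T_t)_{t≥0} is frequently hypercyclic, then: (a) for every ε > 0 there exists a strictly increasing sequence (n_k)_{k∈ℕ} of natural numbers whose range has positive lower density such that ∑_{k>i} ρ(n_k − n_i) < ε for every i; and (b) ρ is bounded on [0,∞). -/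
open MeasureTheory Filter Set Topology ENNReal

-- ===== auxiliary lemmas =====
open Classical in
noncomputable def cnt (A : Set ℕ) (N : ℕ) : ℕ := ((Finset.range N).filter (fun n => n ∈ A)).card

lemma lowerDensityN_eq (A : Set ℕ) :
    lowerDensityN A = liminf (fun N : ℕ => ((cnt A N : ℝ)) / (N : ℝ)) atTop := rfl

lemma cnt_eq_count (A : Set ℕ) [DecidablePred (· ∈ A)] (N : ℕ) :
    cnt A N = Nat.count (· ∈ A) N := by
  rw [Nat.count_eq_card_filter_range, cnt]
  congr 1
  rw [Finset.filter_congr_decidable, Finset.filter_congr_decidable]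

lemma cnt_le (A : Set ℕ) (N : ℕ) : cnt A N ≤ N := by
  classical
  exact le_trans (Finset.card_filter_le _ _) (by simp [cnt])

lemma cnt_mono_aux (A : Set ℕ) (m N : ℕ) (h : m ≤ N) : cnt A N ≤ cnt A m + (N - m) := by
  classical
  rw [cnt_eq_count, cnt_eq_count]
  obtain ⟨k, rfl⟩ := Nat.exists_eq_add_of_le h
  induction k with
  | zero => simp
  | succ k ih =>
    have h2 : m + (k+1) = (m + k) + 1 := by ring
    rw [h2, Nat.count_succ]
    have := ih (Nat.le_add_right _ _)
    split <;> omega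

lemma cnt_mono (A : Set ℕ) : Monotone (cnt A) := by
  classical
  intro a b h
  rw [cnt_eq_count, cnt_eq_count]
  exact Nat.count_monotone _ h

lemma strictMono_add_le {g : ℕ → ℕ} (hg : StrictMono g) (a k : ℕ) : g a + k ≤ g (a + k) := by
  induction k with
  | zero => simp
  | succ k ih =>
    have h2 : a + (k+1) = (a + k) + 1 := by ring
    rw [h2]
    have := hg (show a + k < a + k + 1 by omega)
    omega

lemma eventually_count_of_pos_density {A : Set ℕ} (h : 0 < lowerDensityN A) :
    ∀ᶠ N : ℕ in atTop, (lowerDensityN A / 2) * N ≤ cnt A N := by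
  classical
  have hb : IsBoundedUnder (· ≥ ·) atTop
      (fun N : ℕ => ((cnt A N : ℝ)) / (N : ℝ)) :=
    isBoundedUnder_of ⟨0, fun N => by positivity⟩
  have := eventually_lt_of_lt_liminf (u := fun N : ℕ => ((cnt A N : ℝ)) / (N : ℝ))
      (b := lowerDensityN A / 2) (by rw [← lowerDensityN_eq]; linarith) hb
  filter_upwards [this, eventually_gt_atTop 0] with N hN hN0
  have hN0' : (0:ℝ) < N := by exact_mod_cast hN0
  rw [lt_div_iff₀ hN0'] at hN
  linarith

lemma pos_density_of_eventually {A : Set ℕ} {d : ℝ} (hd : 0 < d)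
    (h : ∀ᶠ N : ℕ in atTop, d * N ≤ cnt A N) : 0 < lowerDensityN A := by
  classical
  have hcb : IsCoboundedUnder (· ≥ ·) atTop (fun N : ℕ => ((cnt A N : ℝ)) / (N : ℝ)) := by
    refine (isBoundedUnder_of ⟨1, fun N => ?_⟩).isCoboundedUnder_ge
    rcases Nat.eq_zero_or_pos N with h0 | h0
    · simp [h0]
    · have : (0:ℝ) < N := by exact_mod_cast h0
      rw [div_le_one this]
      exact_mod_cast cnt_le A N
  have hfin : (d/2 : ℝ) ≤ lowerDensityN A := by
    rw [lowerDensityN_eq]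
    refine le_liminf_of_le hcb ?_
    filter_upwards [h, eventually_gt_atTop 0] with N hN hN0
    have hN0' : (0:ℝ) < N := by exact_mod_cast hN0
    rw [le_div_iff₀ hN0']
    nlinarith
  linarith

lemma infinite_of_pos_density {A : Set ℕ} (h : 0 < lowerDensityN A) : A.Infinite := by
  classical
  intro hfin
  have hc := eventually_count_of_pos_density h
  obtain ⟨N0, hN0⟩ := eventually_atTop.1 hc
  -- cnt A N ≤ card
  set C := hfin.toFinset.card
  have hbound : ∀ N, cnt A N ≤ C := by
    intro N
    refine Finset.card_le_card ?_
    intro x hx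
    simp only [cnt, Finset.mem_filter] at hx
    exact hfin.mem_toFinset.2 hx.2
  set d := lowerDensityN A
  have hd : 0 < d := h
  obtain ⟨N, hN1, hN2⟩ : ∃ N : ℕ, N0 ≤ N ∧ (C + 1 : ℝ) ≤ (d/2) * N := by
    obtain ⟨N, hN⟩ := exists_nat_ge (max (N0:ℝ) (((C:ℝ)+1) * (2/d)))
    refine ⟨N, ?_, ?_⟩
    · exact_mod_cast le_trans (le_max_left _ _) hN
    · have h1 : (((C:ℝ)+1) * (2/d) : ℝ) ≤ N := le_trans (le_max_right _ _) hN
      calc (C+1:ℝ) = ((C+1) * (2/d)) * (d/2) := by field_simp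
        _ ≤ N * (d/2) := by nlinarith
        _ = (d/2) * N := by ring
  have := hN0 N hN1
  have h2 : (cnt A N : ℝ) ≤ C := by exact_mod_cast hbound N
  linarith

lemma infinite_of_eventually_cnt {B : Set ℕ} {d : ℝ} (hd : 0 < d)
    (hev : ∀ᶠ N : ℕ in atTop, d * N ≤ cnt B N) : B.Infinite := by
  classical
  intro hfin
  obtain ⟨N0, hN0⟩ := eventually_atTop.1 hev
  set C := hfin.toFinset.card
  have hbound : ∀ N, cnt B N ≤ C := by
    intro N
    refine Finset.card_le_card ?_
    intro x hx
    simp only [cnt, Finset.mem_filter] at hx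
    exact hfin.mem_toFinset.2 hx.2
  obtain ⟨N, hN⟩ := exists_nat_ge (max (N0:ℝ) (((C:ℝ)+1) * (1/d)))
  have h1 : N0 ≤ N := by exact_mod_cast le_trans (le_max_left _ _) hN
  have h2 : (((C:ℝ)+1) * (1/d)) ≤ N := le_trans (le_max_right _ _) hN
  have h3 := hN0 N h1
  have h4 : (cnt B N : ℝ) ≤ C := by exact_mod_cast hbound N
  have : (C:ℝ) + 1 ≤ d * N := by
    calc (C:ℝ)+1 = (((C:ℝ)+1) * (1/d)) * d := by field_simp
      _ ≤ N * d := by nlinarith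
      _ = d * N := by ring
  linarith

lemma thinned_seq {B : Set ℕ} {d : ℝ} (hd : 0 < d)
    (hev : ∀ᶠ N : ℕ in atTop, d * N ≤ cnt B N) :
    ∃ n : ℕ → ℕ, StrictMono n ∧ (∀ k, n k ∈ B) ∧ (∀ i k, i < k → n i + 3 ≤ n k) ∧
      0 < lowerDensityN (Set.range n) := by
  classical
  have hinf : {x | x ∈ B}.Infinite := infinite_of_eventually_cnt hd hev
  set p : ℕ → Prop := (· ∈ B) with hp
  refine ⟨fun k => Nat.nth p (3*k), ?_, ?_, ?_, ?_⟩
  · exact (Nat.nth_strictMono hinf).comp (fun a b h => by omega)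
  · intro k; exact Nat.nth_mem_of_infinite hinf _
  · intro i k hik
    show Nat.nth p (3*i) + 3 ≤ Nat.nth p (3*k)
    have h1 : Nat.nth p (3*i) + 3 ≤ Nat.nth p (3*i+3) :=
      strictMono_add_le (Nat.nth_strictMono hinf) (3*i) 3
    have h2 : Nat.nth p (3*i+3) ≤ Nat.nth p (3*k) :=
      (Nat.nth_strictMono hinf).monotone (by omega)
    omega
  · refine pos_density_of_eventually (d := d/3) (by linarith) ?_
    filter_upwards [hev] with N hN
    set c := cnt B N with hc
    -- 3 * cnt (range nth..) N ≥ c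
    have key : c ≤ 3 * cnt (Set.range fun k => Nat.nth p (3*k)) N := by
      have himg : (Finset.range ((c+2)/3)).image (fun k => Nat.nth p (3*k)) ⊆
          (Finset.range N).filter (fun x => x ∈ Set.range fun k => Nat.nth p (3*k)) := by
        intro x hx
        simp only [Finset.mem_image, Finset.mem_range] at hx
        obtain ⟨k, hk, rfl⟩ := hx
        have h3k : 3*k < c := by omega
        have : 3*k < Nat.count p N := by
          rw [← cnt_eq_count]; exact h3k
        have hlt : Nat.nth p (3*k) < N := (Nat.lt_nth_iff_count_lt hinf).1 this
        simp only [Finset.mem_filter, Finset.mem_range]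
        exact ⟨hlt, ⟨k, rfl⟩⟩
      have hsm : StrictMono (fun k => Nat.nth p (3*k)) :=
        fun a b hab => (Nat.nth_lt_nth hinf).2 (by omega)
      have hcard : (c+2)/3 ≤ cnt (Set.range fun k => Nat.nth p (3*k)) N := by
        rw [cnt]
        calc (c+2)/3 = ((Finset.range ((c+2)/3)).image (fun k => Nat.nth p (3*k))).card := by
              rw [Finset.card_image_of_injective _ hsm.injective, Finset.card_range]
          _ ≤ _ := Finset.card_le_card himg
      omega
    have : (c:ℝ) ≤ 3 * (cnt (Set.range fun k => Nat.nth p (3*k)) N : ℝ) := by exact_mod_cast key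
    have hdN : d * N ≤ c := hN
    linarith

lemma syndetic_of_pos_density {S : Set ℕ} (h : 0 < lowerDensityN S) :
    ∃ L : ℕ, ∀ g : ℕ, ∃ a b : ℕ, a ∈ S ∧ b ∈ S ∧ a + g ≤ b ∧ b ≤ a + g + L := by
  classical
  by_contra hcon
  push_neg at hcon
  -- hcon : ∀ L, ∃ g, ∀ a b, a ∈ S → b ∈ S → a + g ≤ b → ¬ (b ≤ a + g + L)
  set d := lowerDensityN S with hd
  have hdpos : 0 < d := h
  have hev := eventually_count_of_pos_density h
  obtain ⟨N0, hN0⟩ := eventually_atTop.1 hev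
  have hinf : S.Infinite := infinite_of_eventually_cnt (by linarith : (0:ℝ) < d/2) hev
  obtain ⟨a0, ha0⟩ := hinf.nonempty
  choose G hG using hcon
  have hGpos : ∀ L, 0 < G L := by
    intro L
    by_contra h0
    push_neg at h0
    have := hG L a0 a0 ha0 ha0 (by omega)
    omega
  -- build the sequence c
  set c : ℕ → ℕ := fun j => Nat.rec 0 (fun j cj => G cj + cj) j with hcdef
  have hcsucc : ∀ j, c (j+1) = G (c j) + c j := fun j => rfl
  have hcmono : StrictMono c := by
    refine strictMono_nat_of_lt_succ (fun j => ?_)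
    rw [hcsucc]; have := hGpos (c j); omega
  have hkey : ∀ i j, i < j → ∀ a b, a ∈ S → b ∈ S → b ≠ a + (c j - c i) := by
    rintro i j hij a b ha hb rfl
    obtain ⟨j, rfl⟩ : ∃ j', j = j' + 1 := ⟨j - 1, by omega⟩
    have hci : c i ≤ c j := hcmono.monotone (by omega)
    have hle : c (j+1) - c i = G (c j) + (c j - c i) := by rw [hcsucc]; omega
    have hlt := hG (c j) a (a + (c (j+1) - c i)) ha hb (by omega)
    have : c j - c i ≤ c j := by omega
    omega
  -- K translates
  set K : ℕ := ⌈(2:ℝ)/d⌉₊ + 1 with hK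
  have hKd : 1 < (K:ℝ) * (d/2) := by
    have h1 : (2:ℝ)/d ≤ ⌈(2:ℝ)/d⌉₊ := Nat.le_ceil _
    have h2 : (2:ℝ)/d < K := by push_cast [hK]; linarith
    calc (1:ℝ) = (2/d) * (d/2) := by field_simp
      _ < (K:ℝ) * (d/2) := by
        have : (0:ℝ) < d/2 := by linarith
        exact mul_lt_mul_of_pos_right h2 this
  set cK := c K with hcK
  -- counting
  have hcount : ∀ N, cK ≤ N → K * (cnt S N) ≤ N + K * cK := by
    intro N hcKN
    set F : ℕ → Finset ℕ :=
      fun i => (Finset.range N).filter (fun x => c i ≤ x ∧ (x - c i) ∈ S) with hF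
    have hdisj : ∀ i ∈ Finset.range K, ∀ j ∈ Finset.range K, i ≠ j → Disjoint (F i) (F j) := by
      have main : ∀ i j : ℕ, i < j → Disjoint (F i) (F j) := by
        intro i j hij
        rw [Finset.disjoint_left]
        rintro x hxi hxj
        simp only [hF, Finset.mem_filter, Finset.mem_range] at hxi hxj
        obtain ⟨-, hci, hai⟩ := hxi
        obtain ⟨-, hcj, haj⟩ := hxj
        have hcij : c i ≤ c j := hcmono.monotone (by omega)
        exact hkey i j hij (x - c j) (x - c i) haj hai (by omega)
      intro i hi j hj hij
      rcases lt_or_gt_of_ne hij with h | h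
      · exact main i j h
      · exact (main j i h).symm
    have hsum : ∑ i ∈ Finset.range K, (F i).card ≤ N := by
      rw [← Finset.card_biUnion hdisj]
      refine le_trans (Finset.card_le_card ?_) (by simp : (Finset.range N).card ≤ N)
      intro x hx
      simp only [Finset.mem_biUnion] at hx
      obtain ⟨i, -, hxi⟩ := hx
      simp only [hF, Finset.mem_filter] at hxi
      exact hxi.1
    have hlow : ∀ i, i < K → cnt S N ≤ (F i).card + cK := by
      intro i hi
      have hci : c i ≤ cK := hcmono.monotone (le_of_lt hi)
      have h1 : cnt S N ≤ cnt S (N - c i) + c i := by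
        have := cnt_mono_aux S (N - c i) N (by omega)
        omega
      have h2 : cnt S (N - c i) ≤ (F i).card := by
        rw [cnt]
        have himg : ((Finset.range (N - c i)).filter (fun x => x ∈ S)).image (· + c i) ⊆ F i := by
          intro x hx
          simp only [Finset.mem_image, Finset.mem_filter, Finset.mem_range] at hx
          obtain ⟨y, ⟨hy1, hy2⟩, rfl⟩ := hx
          simp only [hF, Finset.mem_filter, Finset.mem_range]
          exact ⟨by omega, by omega, by simpa using hy2⟩
        calc ((Finset.range (N - c i)).filter (fun x => x ∈ S)).card
            = (((Finset.range (N - c i)).filter (fun x => x ∈ S)).image (· + c i)).card := by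
              rw [Finset.card_image_of_injective _ (add_left_injective (c i))]
          _ ≤ (F i).card := Finset.card_le_card himg
      omega
    calc K * cnt S N = ∑ _i ∈ Finset.range K, cnt S N := by
          rw [Finset.sum_const, Finset.card_range, smul_eq_mul]
      _ ≤ ∑ i ∈ Finset.range K, ((F i).card + cK) := by
          refine Finset.sum_le_sum (fun i hi => hlow i (Finset.mem_range.1 hi))
      _ = (∑ i ∈ Finset.range K, (F i).card) + K * cK := by
          rw [Finset.sum_add_distrib, Finset.sum_const, Finset.card_range, smul_eq_mul]
      _ ≤ N + K * cK := Nat.add_le_add_right hsum _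
  -- pick large N for contradiction
  have hKpos : (0:ℝ) < (K:ℝ) * (d/2) - 1 := by linarith
  obtain ⟨N, hN⟩ := exists_nat_ge (max (max (N0:ℝ) (cK:ℝ))
    (((K:ℝ) * cK + 1) / ((K:ℝ) * (d/2) - 1)))
  have hN1 : N0 ≤ N := by
    have := le_trans (le_max_left _ _) (le_trans (le_max_left _ _) hN); exact_mod_cast this
  have hN2 : cK ≤ N := by
    have := le_trans (le_max_right _ _) (le_trans (le_max_left _ _) hN); exact_mod_cast this
  have hN3 : ((K:ℝ) * cK + 1) / ((K:ℝ) * (d/2) - 1) ≤ N := le_trans (le_max_right _ _) hN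
  have hcnt := hN0 N hN1
  have hcount' := hcount N hN2
  have hcount'' : (K:ℝ) * (cnt S N : ℝ) ≤ (N:ℝ) + (K:ℝ) * cK := by exact_mod_cast hcount'
  have h5 : (K:ℝ) * ((d/2) * N) ≤ (N:ℝ) + (K:ℝ) * cK := by
    calc (K:ℝ) * ((d/2) * N) ≤ (K:ℝ) * (cnt S N : ℝ) := by
          refine mul_le_mul_of_nonneg_left hcnt (by positivity)
      _ ≤ (N:ℝ) + (K:ℝ) * cK := hcount''
  have h6 : ((K:ℝ) * (d/2) - 1) * N ≤ (K:ℝ) * cK := by nlinarith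
  have h7 : ((K:ℝ) * cK + 1) ≤ ((K:ℝ) * (d/2) - 1) * N := by
    rw [div_le_iff₀ hKpos] at hN3
    linarith
  linarith

lemma density_transfer {A : Set ℝ} (hA : 0 < lowerDensityR A) :
    ∀ᶠ N : ℕ in atTop,
      (lowerDensityR A / 4) * N ≤ cnt {m : ℕ | ∃ t, t ∈ A ∧ (m:ℝ) ≤ t ∧ t < m+1} N := by
  classical
  set d := lowerDensityR A with hd
  set B : Set ℕ := {m : ℕ | ∃ t, t ∈ A ∧ (m:ℝ) ≤ t ∧ t < m+1} with hB
  have hb : IsBoundedUnder (· ≥ ·) atTop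
      (fun N : ℝ => (volume (A ∩ Set.Icc 0 N)).toReal / N) := by
    refine ⟨0, ?_⟩
    rw [eventually_map]
    filter_upwards [eventually_gt_atTop (0:ℝ)] with N hN
    positivity
  have hev : ∀ᶠ N : ℝ in atTop, d/2 < (volume (A ∩ Set.Icc 0 N)).toReal / N :=
    eventually_lt_of_lt_liminf (by change d/2 < lowerDensityR A; linarith) hb
  have hevN : ∀ᶠ N : ℕ in atTop, d/2 < (volume (A ∩ Set.Icc 0 (N:ℝ))).toReal / N :=
    tendsto_natCast_atTop_atTop.eventually hev
  have key : ∀ᶠ N : ℕ in atTop, (d/2) * N ≤ (cnt B (N+1) : ℝ) := by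
    filter_upwards [hevN, eventually_gt_atTop 0] with N hN hN0
    have hN0' : (0:ℝ) < N := by exact_mod_cast hN0
    rw [lt_div_iff₀ hN0'] at hN
    have hcover : A ∩ Set.Icc 0 (N:ℝ) ⊆
        ⋃ k ∈ (Finset.range (N+1)).filter (fun m => m ∈ B), Set.Ico (k:ℝ) (k+1) := by
      rintro t ⟨htA, ht0, htN⟩
      have hk : (⌊t⌋₊ : ℝ) ≤ t := Nat.floor_le ht0
      have hk2 : t < ⌊t⌋₊ + 1 := Nat.lt_floor_add_one t
      have hkN : ⌊t⌋₊ < N + 1 := by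
        have h5 : (⌊t⌋₊:ℝ) ≤ N := le_trans hk htN
        have h6 : ⌊t⌋₊ ≤ N := by exact_mod_cast h5
        omega
      refine Set.mem_iUnion₂.2 ⟨⌊t⌋₊, ?_, ⟨hk, hk2⟩⟩
      simp only [Finset.mem_filter, Finset.mem_range]
      exact ⟨hkN, ⟨t, htA, hk, hk2⟩⟩
    have hvol : volume (A ∩ Set.Icc 0 (N:ℝ)) ≤ (cnt B (N+1) : ℝ≥0∞) := by
      refine le_trans (measure_mono hcover) ?_
      refine le_trans (measure_biUnion_finset_le _ _) ?_
      have : ∀ k : ℕ, volume (Set.Ico (k:ℝ) (k+1)) = 1 := by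
        intro k; rw [Real.volume_Ico]; simp
      simp only [this, Finset.sum_const, nsmul_eq_mul, mul_one]
      rw [cnt]
    have hfin : (volume (A ∩ Set.Icc 0 (N:ℝ))).toReal ≤ (cnt B (N+1) : ℝ) := by
      calc (volume (A ∩ Set.Icc 0 (N:ℝ))).toReal
          ≤ ((cnt B (N+1) : ℝ≥0∞)).toReal := ENNReal.toReal_mono (by simp) hvol
        _ = (cnt B (N+1) : ℝ) := by simp
    linarith
  -- now shift index and absorb the  +1
  have hd4 : 0 < d/4 := by linarith
  obtain ⟨N1, hN1⟩ := eventually_atTop.1 key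
  rw [eventually_atTop]
  refine ⟨N1 + 2, fun N hN => ?_⟩
  have hNge : N1 + 1 ≤ N := by omega
  have hN2 : 2 ≤ N := by omega
  have hprev := hN1 (N-1) (by omega)
  have heq : N - 1 + 1 = N := by omega
  rw [heq] at hprev
  have hcast : ((N-1:ℕ):ℝ) = (N:ℝ) - 1 := by
    rw [Nat.cast_sub (by omega)]; simp
  rw [hcast] at hprev
  have hdpos : 0 < d := hA
  have hN2' : (2:ℝ) ≤ N := by exact_mod_cast hN2
  have h2d : 2 * d ≤ d * N := by nlinarith
  have : (d/4) * N ≤ (d/2) * ((N:ℝ) - 1) := by nlinarith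
  linarith

-- admissible weight lemmas
section Adm
variable {ρ : ℝ → ℝ} {M ω : ℝ}
  (hpos : ∀ t : ℝ, 0 ≤ t → 0 < ρ t) (hM : 1 ≤ M)
  (hadm : ∀ τ : ℝ, 0 ≤ τ → ∀ t : ℝ, 0 < t → ρ τ ≤ M * Real.exp (ω * t) * ρ (τ + t))

include hpos hM hadm in
lemma rho_le_of_le : ∀ a b : ℝ, 0 ≤ a → a ≤ b →
    ρ a ≤ M * Real.exp (|ω| * (b - a)) * ρ b := by
  intro a b ha hab
  rcases eq_or_lt_of_le hab with rfl | hlt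
  · have h1 : (0:ℝ) < ρ a := hpos a ha
    have h2 : (1:ℝ) ≤ Real.exp (|ω| * (a - a)) := by
      rw [sub_self, mul_zero, Real.exp_zero]
    have hMe : (1:ℝ) ≤ M * Real.exp (|ω| * (a - a)) := by nlinarith
    calc ρ a = 1 * ρ a := (one_mul _).symm
      _ ≤ M * Real.exp (|ω| * (a - a)) * ρ a :=
          mul_le_mul_of_nonneg_right hMe h1.le
  · have h1 := hadm a ha (b - a) (by linarith)
    have h2 : a + (b - a) = b := by ring
    rw [h2] at h1
    have h3 : Real.exp (ω * (b-a)) ≤ Real.exp (|ω| * (b-a)) := by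
      refine Real.exp_le_exp.2 ?_
      have : ω ≤ |ω| := le_abs_self ω
      nlinarith [abs_nonneg ω]
    have h4 : 0 < ρ b := hpos b (by linarith)
    refine le_trans h1 ?_
    rw [mul_assoc, mul_assoc]
    exact mul_le_mul_of_nonneg_left (mul_le_mul_of_nonneg_right h3 h4.le) (by linarith)

include hpos hM hadm in
lemma rho_le_of_close : ∀ a b : ℝ, 0 ≤ a → a ≤ b → b ≤ a + 3 →
    ρ a ≤ M * Real.exp (3 * |ω|) * ρ b := by
  intro a b ha hab hb3
  refine le_trans (rho_le_of_le hpos hM hadm a b ha hab) ?_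
  have h3 : Real.exp (|ω| * (b-a)) ≤ Real.exp (3 * |ω|) := by
    refine Real.exp_le_exp.2 ?_
    nlinarith [abs_nonneg ω]
  have h4 : 0 < ρ b := hpos b (by linarith)
  rw [mul_assoc, mul_assoc]
  exact mul_le_mul_of_nonneg_left (mul_le_mul_of_nonneg_right h3 h4.le) (by linarith)

end Adm

section Anal

variable {ρ : ℝ → ℝ} {M ω : ℝ} {p : ℝ≥0∞}

lemma norm_to_lintegral (hmeas : Measurable ρ)
    (hp0 : p ≠ 0) (hp : p ≠ ⊤)
    (g v : Lp ℝ p (weightedMeasure ρ)) {δ : ℝ}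
    (hdist : dist g v < δ)
    (G w : ℝ → ℝ) (hG : Measurable G) (hw : Measurable w)
    (hgG : ⇑g =ᵐ[weightedMeasure ρ] G)
    (hv : ⇑v =ᵐ[weightedMeasure ρ] w) :
    ∫⁻ x in Set.Ici 0,
        ENNReal.ofReal (ρ x) * (‖G x - w x‖₊ : ℝ≥0∞) ^ p.toReal ∂volume
      < (ENNReal.ofReal δ) ^ p.toReal := by
  have hq0 : 0 < p.toReal := ENNReal.toReal_pos hp0 hp
  have h1 : eLpNorm (⇑g - ⇑v) p (weightedMeasure ρ) < ENNReal.ofReal δ := by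
    have hne : eLpNorm (⇑g - ⇑v) p (weightedMeasure ρ) ≠ ⊤ := by
      rw [← eLpNorm_congr_ae (Lp.coeFn_sub g v)]
      exact Lp.eLpNorm_ne_top _
    rw [ENNReal.lt_ofReal_iff_toReal_lt hne, ← Lp.dist_def]
    exact hdist
  have h2 : eLpNorm (⇑g - ⇑v) p (weightedMeasure ρ)
      = eLpNorm (fun x => G x - w x) p (weightedMeasure ρ) :=
    eLpNorm_congr_ae (hgG.sub hv)
  rw [h2, eLpNorm_eq_lintegral_rpow_enorm_toReal hp0 hp] at h1
  have h3 : ∫⁻ x, (‖G x - w x‖₊ : ℝ≥0∞) ^ p.toReal ∂(weightedMeasure ρ)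
      < (ENNReal.ofReal δ) ^ p.toReal := by
    have := ENNReal.rpow_lt_rpow h1 hq0
    rwa [← ENNReal.rpow_mul, one_div, inv_mul_cancel₀ hq0.ne', ENNReal.rpow_one] at this
  rw [weightedMeasure, lintegral_withDensity_eq_lintegral_mul _ hmeas.ennreal_ofReal
    (show Measurable fun x => (‖G x - w x‖₊ : ℝ≥0∞) ^ p.toReal from
      ((hG.sub hw).nnnorm.coe_nnreal_ennreal).pow_const _)] at h3
  simpa using h3

end Anal

section Master

variable {ρ : ℝ → ℝ} {p : ℝ≥0∞}

set_option maxHeartbeats 1000000 in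
lemma master (hmeas : Measurable ρ) (hpos : ∀ t : ℝ, 0 ≤ t → 0 < ρ t)
    {M ω : ℝ} (hM : 1 ≤ M)
    (hadm : ∀ τ : ℝ, 0 ≤ τ → ∀ t : ℝ, 0 < t → ρ τ ≤ M * Real.exp (ω * t) * ρ (τ + t))
    [Fact (1 ≤ p)] (hp : p ≠ ⊤)
    (T : ℝ → Lp ℝ p (weightedMeasure ρ) →L[ℝ] Lp ℝ p (weightedMeasure ρ))
    (htrans : ∀ t : ℝ, 0 ≤ t → ∀ f : Lp ℝ p (weightedMeasure ρ),
      ⇑(T t f) =ᵐ[weightedMeasure ρ] fun x => f (x + t))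
    (hfh : FreqHypercyclicSemigroup T)
    (ε : ℝ) (hε : 0 < ε) :
    ∃ n : ℕ → ℕ, StrictMono n ∧ 0 < lowerDensityN (Set.range n) ∧
      (∀ i k : ℕ, i < k → n i + 3 ≤ n k) ∧
      (∀ i : ℕ, ∀ Fs : Finset ℕ, (∀ k ∈ Fs, i < k) →
        ∑ k ∈ Fs, ρ ((n k : ℝ) - (n i : ℝ)) ≤ ε / 2) := by
  classical
  have hp0 : p ≠ 0 := by
    have h1 : (1:ℝ≥0∞) ≤ p := Fact.out
    intro h; rw [h] at h1; simp at h1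
  set q := p.toReal with hqdef
  have hq0 : 0 < q := ENNReal.toReal_pos hp0 hp
  set C₀ : ℝ := M * Real.exp (3 * |ω|) with hC₀
  have hC₀pos : 0 < C₀ := by positivity
  have hρ0 : 0 < ρ 0 := hpos 0 le_rfl
  have hrho_close := rho_le_of_close hpos hM hadm
  -- finite measure of Icc 1 2
  have hμ12 : (weightedMeasure ρ) (Set.Icc (1:ℝ) 2) ≠ ⊤ := by
    have hb : ∀ x ∈ Set.Icc (1:ℝ) 2, ENNReal.ofReal (ρ x) ≤ ENNReal.ofReal (C₀ * ρ 3) := by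
      intro x hx
      simp only [Set.mem_Icc] at hx
      refine ENNReal.ofReal_le_ofReal ?_
      have := hrho_close x 3 (by linarith) (by linarith) (by linarith)
      calc ρ x ≤ M * Real.exp (3*|ω|) * ρ 3 := this
        _ = C₀ * ρ 3 := by rw [hC₀]
    have hcalc : (weightedMeasure ρ) (Set.Icc (1:ℝ) 2)
        ≤ ENNReal.ofReal (C₀ * ρ 3) * volume (Set.Icc (1:ℝ) 2) := by
      rw [weightedMeasure, withDensity_apply _ measurableSet_Icc]
      calc ∫⁻ x in Set.Icc (1:ℝ) 2, ENNReal.ofReal (ρ x) ∂(volume.restrict (Set.Ici 0))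
          ≤ ∫⁻ _x in Set.Icc (1:ℝ) 2, ENNReal.ofReal (C₀ * ρ 3) ∂(volume.restrict (Set.Ici 0)) :=
            setLIntegral_mono measurable_const hb
        _ = ENNReal.ofReal (C₀ * ρ 3) * (volume.restrict (Set.Ici 0)) (Set.Icc (1:ℝ) 2) :=
            setLIntegral_const _ _
        _ ≤ ENNReal.ofReal (C₀ * ρ 3) * volume (Set.Icc (1:ℝ) 2) := by
            refine mul_le_mul_right ?_ _
            rw [Measure.restrict_apply measurableSet_Icc]
            exact measure_mono Set.inter_subset_left
    refine ne_top_of_le_ne_top ?_ hcalc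
    rw [Real.volume_Icc]
    exact ENNReal.mul_ne_top ENNReal.ofReal_ne_top ENNReal.ofReal_ne_top
  set v : Lp ℝ p (weightedMeasure ρ) := indicatorConstLp p measurableSet_Icc hμ12 (1:ℝ) with hvdef
  set w : ℝ → ℝ := Set.indicator (Set.Icc (1:ℝ) 2) (fun _ => 1) with hwdef
  have hwmeas : Measurable w := measurable_const.indicator measurableSet_Icc
  -- choice of δ
  set θ : ℝ := min (ρ 0 * (1/2)^q * (1/2) / C₀) ((ε/2) * ((1/2:ℝ)^q * (1/2)) / C₀) with hθdef
  have h2q : (0:ℝ) < (1/2:ℝ)^q := Real.rpow_pos_of_pos (by norm_num) q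
  have hθpos : 0 < θ := by
    refine lt_min ?_ ?_ <;> positivity
  set δ : ℝ := min 1 (θ ^ (1/q)) with hδdef
  have hδpos : 0 < δ := by
    refine lt_min one_pos (Real.rpow_pos_of_pos hθpos _)
  have hδq : δ ^ q ≤ θ := by
    have h1 : δ ≤ θ ^ (1/q) := min_le_right _ _
    have h2 : δ ^ q ≤ (θ ^ (1/q)) ^ q := Real.rpow_le_rpow hδpos.le h1 hq0.le
    rwa [← Real.rpow_mul hθpos.le, one_div, inv_mul_cancel₀ hq0.ne', Real.rpow_one] at h2
  -- the frequently hypercyclic vector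
  obtain ⟨f, hf⟩ := hfh
  have hFmeas : Measurable (⇑f : ℝ → ℝ) := (Lp.stronglyMeasurable f).measurable
  set F : ℝ → ℝ := ⇑f with hFdef
  have hshift : ∀ s : ℝ, Measurable fun x : ℝ => F (x + s) :=
    fun s => hFmeas.comp (measurable_add_const s)
  set A : Set ℝ := {t : ℝ | 0 ≤ t ∧ T t f ∈ Metric.ball v δ} with hAdef
  have hApos : 0 < lowerDensityR A :=
    hf (Metric.ball v δ) Metric.isOpen_ball ⟨v, Metric.mem_ball_self hδpos⟩
  -- the integral bound for each t ∈ A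
  have hLP : ∀ t ∈ A, ∫⁻ x in Set.Ici 0,
      ENNReal.ofReal (ρ x) * ((‖F (x + t) - w x‖₊ : ℝ≥0∞)) ^ q ∂volume
      < (ENNReal.ofReal δ) ^ q := by
    rintro t ⟨ht0, htb⟩
    exact norm_to_lintegral hmeas hp0 hp (T t f) v (Metric.mem_ball.1 htb)
      (fun x => F (x + t)) w (hshift t) hwmeas
      (htrans t ht0 f) indicatorConstLp_coeFn
  -- measurability of good/bad sets
  have hsetmeas : ∀ s : ℝ, MeasurableSet {y : ℝ | (1:ℝ)/2 ≤ |F (y + s) - 1|} := by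
    intro s
    exact measurableSet_le measurable_const (((hshift s).sub measurable_const).abs)
  -- Estimate 1 : mass of good set
  have hGood : ∀ t ∈ A, ENNReal.ofReal (1/2) ≤
      volume {y : ℝ | y ∈ Set.Icc (1:ℝ) 2 ∧ |F (y + t) - 1| < 1/2} := by
    intro t ht
    set Bad : Set ℝ := Set.Icc (1:ℝ) 2 ∩ {y : ℝ | (1:ℝ)/2 ≤ |F (y + t) - 1|} with hBadDef
    have hBadMeas : MeasurableSet Bad := measurableSet_Icc.inter (hsetmeas t)
    -- pointwise bound on Bad
    have hpoint : ∀ x ∈ Bad, ENNReal.ofReal (ρ 0) * (ENNReal.ofReal (1/2)) ^ q ≤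
        ENNReal.ofReal C₀ * (ENNReal.ofReal (ρ x) * ((‖F (x + t) - w x‖₊ : ℝ≥0∞)) ^ q) := by
      rintro x ⟨hx12, hxbad⟩
      simp only [Set.mem_Icc] at hx12
      have hwx : w x = 1 := Set.indicator_of_mem (by exact ⟨hx12.1, hx12.2⟩) _
      have hρx : ENNReal.ofReal (ρ 0) ≤ ENNReal.ofReal C₀ * ENNReal.ofReal (ρ x) := by
        rw [← ENNReal.ofReal_mul hC₀pos.le]
        refine ENNReal.ofReal_le_ofReal ?_
        have := hrho_close 0 x le_rfl (by linarith) (by linarith)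
        calc ρ 0 ≤ M * Real.exp (3*|ω|) * ρ x := this
          _ = C₀ * ρ x := by rw [hC₀]
      have hnrm : (ENNReal.ofReal (1/2)) ^ q ≤ ((‖F (x + t) - w x‖₊ : ℝ≥0∞)) ^ q := by
        refine ENNReal.rpow_le_rpow ?_ hq0.le
        rw [← enorm_eq_nnnorm, ← ofReal_norm]
        refine ENNReal.ofReal_le_ofReal ?_
        rw [hwx, Real.norm_eq_abs]
        exact hxbad
      calc ENNReal.ofReal (ρ 0) * (ENNReal.ofReal (1/2)) ^ q
          ≤ (ENNReal.ofReal C₀ * ENNReal.ofReal (ρ x)) * ((‖F (x + t) - w x‖₊ : ℝ≥0∞)) ^ q :=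
            mul_le_mul' hρx hnrm
        _ = ENNReal.ofReal C₀ * (ENNReal.ofReal (ρ x) * ((‖F (x + t) - w x‖₊ : ℝ≥0∞)) ^ q) := by
            rw [mul_assoc]
    have hBadsub : Bad ⊆ Set.Ici (0:ℝ) := by
      rintro x ⟨hx12, -⟩
      simp only [Set.mem_Icc] at hx12
      exact le_trans (by norm_num) hx12.1
    have hintmeas : Measurable (fun x => ENNReal.ofReal C₀ *
        (ENNReal.ofReal (ρ x) * ((‖F (x + t) - w x‖₊ : ℝ≥0∞)) ^ q)) := by
      refine measurable_const.mul (hmeas.ennreal_ofReal.mul ?_)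
      exact (((hshift t).sub hwmeas).nnnorm.coe_nnreal_ennreal).pow_const _
    have hkey : ENNReal.ofReal (ρ 0) * (ENNReal.ofReal (1/2)) ^ q * volume Bad
        ≤ ENNReal.ofReal C₀ * (ENNReal.ofReal δ) ^ q := by
      calc ENNReal.ofReal (ρ 0) * (ENNReal.ofReal (1/2)) ^ q * volume Bad
          = ∫⁻ _x in Bad, ENNReal.ofReal (ρ 0) * (ENNReal.ofReal (1/2)) ^ q ∂volume :=
            (setLIntegral_const _ _).symm
        _ ≤ ∫⁻ x in Bad, ENNReal.ofReal C₀ *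
              (ENNReal.ofReal (ρ x) * ((‖F (x + t) - w x‖₊ : ℝ≥0∞)) ^ q) ∂volume :=
            setLIntegral_mono hintmeas hpoint
        _ = ENNReal.ofReal C₀ * ∫⁻ x in Bad,
              ENNReal.ofReal (ρ x) * ((‖F (x + t) - w x‖₊ : ℝ≥0∞)) ^ q ∂volume := by
            exact lintegral_const_mul _ (hmeas.ennreal_ofReal.mul
              ((((hshift t).sub hwmeas).nnnorm.coe_nnreal_ennreal).pow_const _))
        _ ≤ ENNReal.ofReal C₀ * ∫⁻ x in Set.Ici 0,
              ENNReal.ofReal (ρ x) * ((‖F (x + t) - w x‖₊ : ℝ≥0∞)) ^ q ∂volume :=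
            mul_le_mul_right (lintegral_mono_set hBadsub) _
        _ ≤ ENNReal.ofReal C₀ * (ENNReal.ofReal δ) ^ q :=
            mul_le_mul_right (le_of_lt (hLP t ht)) _
    -- use the choice of δ
    have hδsmall : ENNReal.ofReal C₀ * (ENNReal.ofReal δ) ^ q
        ≤ ENNReal.ofReal (ρ 0) * (ENNReal.ofReal (1/2)) ^ q * ENNReal.ofReal (1/2) := by
      rw [ENNReal.ofReal_rpow_of_nonneg hδpos.le hq0.le,
        ENNReal.ofReal_rpow_of_nonneg (by norm_num) hq0.le,
        ← ENNReal.ofReal_mul hC₀pos.le, ← ENNReal.ofReal_mul (by positivity),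
        ← ENNReal.ofReal_mul (by positivity)]
      refine ENNReal.ofReal_le_ofReal ?_
      have h1 : δ ^ q ≤ ρ 0 * (1/2)^q * (1/2) / C₀ := le_trans hδq (min_le_left _ _)
      rw [le_div_iff₀ hC₀pos] at h1
      calc C₀ * δ ^ q = δ ^ q * C₀ := mul_comm _ _
        _ ≤ ρ 0 * (1/2)^q * (1/2) := h1
    have hc0 : ENNReal.ofReal (ρ 0) * (ENNReal.ofReal (1/2)) ^ q ≠ 0 := by
      refine mul_ne_zero (ENNReal.ofReal_pos.2 hρ0).ne' ?_
      exact (ENNReal.rpow_pos (ENNReal.ofReal_pos.2 (by norm_num)) ENNReal.ofReal_ne_top).ne'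
    have hctop : ENNReal.ofReal (ρ 0) * (ENNReal.ofReal (1/2)) ^ q ≠ ⊤ :=
      ENNReal.mul_ne_top ENNReal.ofReal_ne_top
        (ENNReal.rpow_ne_top_of_nonneg hq0.le ENNReal.ofReal_ne_top)
    have hBadLe : volume Bad ≤ ENNReal.ofReal (1/2) := by
      rw [← ENNReal.mul_le_mul_iff_right hc0 hctop]
      exact le_trans hkey hδsmall
    have hGoodEq : {y : ℝ | y ∈ Set.Icc (1:ℝ) 2 ∧ |F (y + t) - 1| < 1/2}
        = Set.Icc (1:ℝ) 2 \ Bad := by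
      ext y
      simp only [Set.mem_setOf_eq, Set.mem_diff, hBadDef, Set.mem_inter_iff, not_and, not_le]
      constructor
      · rintro ⟨h1, h2⟩; exact ⟨h1, fun _ => h2⟩
      · rintro ⟨h1, h2⟩; exact ⟨h1, h2 h1⟩
    rw [hGoodEq, measure_diff Set.inter_subset_left hBadMeas.nullMeasurableSet
      (ne_top_of_le_ne_top ENNReal.ofReal_ne_top hBadLe), Real.volume_Icc]
    have h21 : (2:ℝ) - 1 = 1 := by norm_num
    rw [h21]
    calc ENNReal.ofReal (1/2) = ENNReal.ofReal 1 - ENNReal.ofReal (1/2) := by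
          rw [← ENNReal.ofReal_sub 1 (by norm_num)]; norm_num
      _ ≤ ENNReal.ofReal 1 - volume Bad := tsub_le_tsub_left hBadLe _
  -- construct the sequence
  set Bset : Set ℕ := {m : ℕ | ∃ t, t ∈ A ∧ (m:ℝ) ≤ t ∧ t < m+1} with hBsetDef
  have hev := density_transfer hApos
  obtain ⟨n, hmono, hBmem, hgap, hdens⟩ :=
    thinned_seq (by linarith : (0:ℝ) < lowerDensityR A / 4) hev
  choose τ hτA hτl hτu using fun k => hBmem k
  refine ⟨n, hmono, hdens, hgap, ?_⟩
  -- the summation estimate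
  intro i Fs hFs
  have hsA : τ i ∈ A := hτA i
  have hs0 : 0 ≤ τ i := hsA.1
  set E : ℕ → Set ℝ := fun k =>
    Set.Icc (τ k - τ i + 1) (τ k - τ i + 2) ∩ {x : ℝ | |F (x + τ i) - 1| < 1/2} with hEdef
  have hltmeas : MeasurableSet {x : ℝ | |F (x + τ i) - 1| < 1/2} := by
    have : {x : ℝ | |F (x + τ i) - 1| < 1/2} = {x : ℝ | (1:ℝ)/2 ≤ |F (x + τ i) - 1|}ᶜ := by
      ext x; simp [not_le]
    rw [this]
    exact (hsetmeas (τ i)).compl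
  have hEmeas : ∀ k, MeasurableSet (E k) := fun k => measurableSet_Icc.inter hltmeas
  -- bounds for k > i
  have hEsub : ∀ k, i < k → E k ⊆
      Set.Ioo ((n k : ℝ) - (n i : ℝ)) ((n k : ℝ) - (n i : ℝ) + 3) := by
    intro k hik x hx
    obtain ⟨⟨hx1, hx2⟩, -⟩ := hx
    have h1 : (n k : ℝ) ≤ τ k := hτl k
    have h2 : τ k < n k + 1 := hτu k
    have h3 : (n i : ℝ) ≤ τ i := hτl i
    have h4 : τ i < n i + 1 := hτu i
    constructor <;> [skip; skip] <;> [linarith; linarith]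
  have hm3 : ∀ k, i < k → (3:ℝ) ≤ (n k : ℝ) - (n i : ℝ) := by
    intro k hik
    have := hgap i k hik
    have : (n i : ℝ) + 3 ≤ (n k : ℝ) := by exact_mod_cast this
    linarith
  -- volume lower bound for E k
  have hEvol : ∀ k, i < k → ENNReal.ofReal (1/2) ≤ volume (E k) := by
    intro k hik
    have heq : E k = (fun x => x + (-(τ k - τ i))) ⁻¹'
        {y : ℝ | y ∈ Set.Icc (1:ℝ) 2 ∧ |F (y + τ k) - 1| < 1/2} := by
      ext x
      have harg : x + -(τ k - τ i) + τ k = x + τ i := by ring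
      simp only [hEdef, Set.mem_preimage, Set.mem_inter_iff, Set.mem_Icc, Set.mem_setOf_eq, harg]
      constructor
      · rintro ⟨⟨h1, h2⟩, h3⟩; exact ⟨⟨by linarith, by linarith⟩, h3⟩
      · rintro ⟨⟨h1, h2⟩, h3⟩; exact ⟨⟨by linarith, by linarith⟩, h3⟩
    rw [heq, measure_preimage_add_right]
    exact hGood (τ k) (hτA k)
  -- pointwise bound on E k
  have hpointE : ∀ k, i < k → ∀ x ∈ E k,
      ENNReal.ofReal (ρ ((n k : ℝ) - (n i : ℝ))) * (ENNReal.ofReal (1/2)) ^ q ≤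
      ENNReal.ofReal C₀ * (ENNReal.ofReal (ρ x) * ((‖F (x + τ i) - w x‖₊ : ℝ≥0∞)) ^ q) := by
    intro k hik x hx
    have hxIoo := hEsub k hik hx
    obtain ⟨-, hxgood⟩ := hx
    simp only [Set.mem_setOf_eq] at hxgood
    obtain ⟨hxl, hxu⟩ := hxIoo
    have h3m := hm3 k hik
    have hwx : w x = 0 := by
      refine Set.indicator_of_notMem (fun hc => ?_) _
      have := hc.2
      linarith
    have hρx : ENNReal.ofReal (ρ ((n k : ℝ) - (n i : ℝ))) ≤
        ENNReal.ofReal C₀ * ENNReal.ofReal (ρ x) := by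
      rw [← ENNReal.ofReal_mul hC₀pos.le]
      refine ENNReal.ofReal_le_ofReal ?_
      have := hrho_close ((n k : ℝ) - (n i : ℝ)) x (by linarith) hxl.le (by linarith)
      calc ρ ((n k : ℝ) - (n i : ℝ)) ≤ M * Real.exp (3*|ω|) * ρ x := this
        _ = C₀ * ρ x := by rw [hC₀]
    have hnrm : (ENNReal.ofReal (1/2)) ^ q ≤ ((‖F (x + τ i) - w x‖₊ : ℝ≥0∞)) ^ q := by
      refine ENNReal.rpow_le_rpow ?_ hq0.le
      rw [← enorm_eq_nnnorm, ← ofReal_norm]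
      refine ENNReal.ofReal_le_ofReal ?_
      rw [hwx, Real.norm_eq_abs, sub_zero]
      have habs := abs_sub_abs_le_abs_sub (1:ℝ) (F (x + τ i))
      rw [abs_one, abs_sub_comm] at habs
      linarith
    calc ENNReal.ofReal (ρ ((n k : ℝ) - (n i : ℝ))) * (ENNReal.ofReal (1/2)) ^ q
        ≤ (ENNReal.ofReal C₀ * ENNReal.ofReal (ρ x)) * ((‖F (x + τ i) - w x‖₊ : ℝ≥0∞)) ^ q :=
          mul_le_mul' hρx hnrm
      _ = ENNReal.ofReal C₀ * (ENNReal.ofReal (ρ x) * ((‖F (x + τ i) - w x‖₊ : ℝ≥0∞)) ^ q) := by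
          rw [mul_assoc]
  -- the integrand and its measurability
  set IG : ℝ → ℝ≥0∞ := fun x =>
    ENNReal.ofReal (ρ x) * ((‖F (x + τ i) - w x‖₊ : ℝ≥0∞)) ^ q with hIGdef
  have hIGmeas : Measurable IG :=
    hmeas.ennreal_ofReal.mul
      ((((hshift (τ i)).sub hwmeas).nnnorm.coe_nnreal_ennreal).pow_const _)
  -- disjointness
  have hdisjFs : (↑Fs : Set ℕ).PairwiseDisjoint E := by
    intro k hk k' hk' hkk'
    simp only [Finset.coe_sort_coe, Finset.mem_coe] at hk hk'
    have hik : i < k := hFs k hk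
    have hik' : i < k' := hFs k' hk'
    -- wlog k < k'
    have main : ∀ a b : ℕ, i < a → i < b → a < b → Disjoint (E a) (E b) := by
      intro a b hia hib hab
      rw [Set.disjoint_left]
      intro x hxa hxb
      have h1 := hEsub a hia hxa
      have h2 := hEsub b hib hxb
      have h3 := hgap a b hab
      have h3' : (n a : ℝ) + 3 ≤ (n b : ℝ) := by exact_mod_cast h3
      have h4 : (n i : ℝ) ≤ (n a : ℝ) := by
        have := (hmono.monotone (le_of_lt hia))
        exact_mod_cast this
      obtain ⟨ha1, ha2⟩ := h1
      obtain ⟨hb1, hb2⟩ := h2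
      linarith
    rcases lt_or_gt_of_ne hkk' with h | h
    · exact main k k' hik hik' h
    · exact (main k' k hik' hik h).symm
  -- the union is inside Ici 0
  have hUnionSub : (⋃ k ∈ Fs, E k) ⊆ Set.Ici (0:ℝ) := by
    refine Set.iUnion₂_subset (fun k hk => ?_)
    intro x hx
    have h1 := hEsub k (hFs k hk) hx
    have h2 := hm3 k (hFs k hk)
    have := h1.1
    simp only [Set.mem_Ici]
    linarith
  -- master chain
  have hsum : ∑ k ∈ Fs, ∫⁻ x in E k, IG x ∂volume < (ENNReal.ofReal δ) ^ q := by
    rw [← lintegral_biUnion_finset hdisjFs (fun k _ => hEmeas k)]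
    calc ∫⁻ x in ⋃ k ∈ Fs, E k, IG x ∂volume
        ≤ ∫⁻ x in Set.Ici 0, IG x ∂volume := lintegral_mono_set hUnionSub
      _ < (ENNReal.ofReal δ) ^ q := hLP (τ i) hsA
  have hterm : ∀ k ∈ Fs,
      ENNReal.ofReal (ρ ((n k : ℝ) - (n i : ℝ))) * ((ENNReal.ofReal (1/2)) ^ q * ENNReal.ofReal (1/2))
      ≤ ENNReal.ofReal C₀ * ∫⁻ x in E k, IG x ∂volume := by
    intro k hk
    have hik := hFs k hk
    calc ENNReal.ofReal (ρ ((n k : ℝ) - (n i : ℝ))) * ((ENNReal.ofReal (1/2)) ^ q * ENNReal.ofReal (1/2))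
        = (ENNReal.ofReal (ρ ((n k : ℝ) - (n i : ℝ))) * (ENNReal.ofReal (1/2)) ^ q) * ENNReal.ofReal (1/2) := by
          rw [mul_assoc]
      _ ≤ (ENNReal.ofReal (ρ ((n k : ℝ) - (n i : ℝ))) * (ENNReal.ofReal (1/2)) ^ q) * volume (E k) :=
          mul_le_mul_right (hEvol k hik) _
      _ = ∫⁻ _x in E k, ENNReal.ofReal (ρ ((n k : ℝ) - (n i : ℝ))) * (ENNReal.ofReal (1/2)) ^ q ∂volume :=
          (setLIntegral_const _ _).symm
      _ ≤ ∫⁻ x in E k, ENNReal.ofReal C₀ * IG x ∂volume :=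
          setLIntegral_mono (measurable_const.mul hIGmeas) (hpointE k hik)
      _ = ENNReal.ofReal C₀ * ∫⁻ x in E k, IG x ∂volume := lintegral_const_mul _ hIGmeas
  have htotal : ∑ k ∈ Fs, ENNReal.ofReal (ρ ((n k : ℝ) - (n i : ℝ)))
        * ((ENNReal.ofReal (1/2)) ^ q * ENNReal.ofReal (1/2))
      ≤ ENNReal.ofReal ((ε/2) * ((1/2:ℝ)^q * (1/2))) := by
    calc ∑ k ∈ Fs, ENNReal.ofReal (ρ ((n k : ℝ) - (n i : ℝ)))
          * ((ENNReal.ofReal (1/2)) ^ q * ENNReal.ofReal (1/2))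
        ≤ ∑ k ∈ Fs, ENNReal.ofReal C₀ * ∫⁻ x in E k, IG x ∂volume :=
          Finset.sum_le_sum hterm
      _ = ENNReal.ofReal C₀ * ∑ k ∈ Fs, ∫⁻ x in E k, IG x ∂volume := by
          rw [Finset.mul_sum]
      _ ≤ ENNReal.ofReal C₀ * (ENNReal.ofReal δ) ^ q := mul_le_mul_right (le_of_lt hsum) _
      _ ≤ ENNReal.ofReal ((ε/2) * ((1/2:ℝ)^q * (1/2))) := by
          rw [ENNReal.ofReal_rpow_of_nonneg hδpos.le hq0.le, ← ENNReal.ofReal_mul hC₀pos.le]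
          refine ENNReal.ofReal_le_ofReal ?_
          have h1 : δ ^ q ≤ (ε/2) * ((1/2:ℝ)^q * (1/2)) / C₀ := le_trans hδq (min_le_right _ _)
          rw [le_div_iff₀ hC₀pos] at h1
          calc C₀ * δ ^ q = δ ^ q * C₀ := mul_comm _ _
            _ ≤ (ε/2) * ((1/2:ℝ)^q * (1/2)) := h1
  -- convert to a real inequality
  have hρnn : ∀ k ∈ Fs, 0 ≤ ρ ((n k : ℝ) - (n i : ℝ)) := by
    intro k hk
    exact (hpos _ (by linarith [hm3 k (hFs k hk)])).le
  have hLHS : ∑ k ∈ Fs, ENNReal.ofReal (ρ ((n k : ℝ) - (n i : ℝ)))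
        * ((ENNReal.ofReal (1/2)) ^ q * ENNReal.ofReal (1/2))
      = ENNReal.ofReal (∑ k ∈ Fs, ρ ((n k : ℝ) - (n i : ℝ)) * ((1/2:ℝ)^q * (1/2))) := by
    rw [ENNReal.ofReal_sum_of_nonneg (fun k hk => by
      have := hρnn k hk; positivity)]
    refine Finset.sum_congr rfl (fun k hk => ?_)
    rw [ENNReal.ofReal_mul (hρnn k hk), ENNReal.ofReal_mul (by positivity : (0:ℝ) ≤ (1/2:ℝ)^q),
      ENNReal.ofReal_rpow_of_nonneg (by norm_num) hq0.le]
  rw [hLHS] at htotal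
  rw [ENNReal.ofReal_le_ofReal_iff (by positivity)] at htotal
  have hc2 : (0:ℝ) < (1/2:ℝ)^q * (1/2) := by positivity
  rw [← Finset.sum_mul] at htotal
  exact le_of_mul_le_mul_right htotal hc2

end Master

-- ===== end auxiliary =====


theorem statement14 (ρ : ℝ → ℝ) (hρ : AdmissibleWeight ρ)
    (p : ℝ≥0∞) [Fact (1 ≤ p)] (hp : p ≠ ⊤)
    (T : ℝ → Lp ℝ p (weightedMeasure ρ) →L[ℝ] Lp ℝ p (weightedMeasure ρ))
    (hT : IsC0Semigroup T)
    (htrans : ∀ t : ℝ, 0 ≤ t → ∀ f : Lp ℝ p (weightedMeasure ρ),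
      ⇑(T t f) =ᵐ[weightedMeasure ρ] fun x => f (x + t))
    (hfh : FreqHypercyclicSemigroup T) :
    (∀ ε : ℝ, 0 < ε → ∃ n : ℕ → ℕ, StrictMono n ∧ 0 < lowerDensityN (Set.range n) ∧
      ∀ i : ℕ, Summable (fun k : ℕ => if i < k then ρ ((n k : ℝ) - (n i : ℝ)) else 0) ∧
        ∑' k : ℕ, (if i < k then ρ ((n k : ℝ) - (n i : ℝ)) else 0) < ε) ∧
    ∃ C : ℝ, ∀ t : ℝ, 0 ≤ t → ρ t ≤ C := by
  obtain ⟨hmeas, hpos, M, hM, ω, hadm⟩ := hρ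
  have hmaster := master hmeas hpos hM hadm hp T htrans hfh
  constructor
  · intro ε hε
    obtain ⟨n, hmono, hdens, hgap, hsum⟩ := hmaster ε hε
    refine ⟨n, hmono, hdens, fun i => ?_⟩
    have hnonneg : ∀ k, 0 ≤ (if i < k then ρ ((n k : ℝ) - (n i : ℝ)) else 0) := by
      intro k
      split
      · next h =>
          refine (hpos _ ?_).le
          have h1 := hgap i k h
          have h2 : (n i : ℝ) + 3 ≤ (n k : ℝ) := by exact_mod_cast h1
          linarith
      · exact le_refl 0
    have hpartial : ∀ N, ∑ k ∈ Finset.range N,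
        (if i < k then ρ ((n k : ℝ) - (n i : ℝ)) else 0) ≤ ε / 2 := by
      intro N
      rw [← Finset.sum_filter]
      exact hsum i _ (fun k hk => (Finset.mem_filter.1 hk).2)
    have hsummable := summable_of_sum_range_le hnonneg hpartial
    refine ⟨hsummable, lt_of_le_of_lt (Summable.tsum_le_of_sum_range_le hsummable hpartial) (by linarith)⟩
  · obtain ⟨n, hmono, hdens, hgap, hsum⟩ := hmaster 1 one_pos
    obtain ⟨L, hL⟩ := syndetic_of_pos_density hdens
    refine ⟨M * Real.exp (|ω| * ((L:ℝ) + 4)) * (1/2), fun t ht => ?_⟩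
    set g : ℕ := max 3 ⌈t⌉₊ with hgdef
    obtain ⟨a, b, haS, hbS, hab1, hab2⟩ := hL g
    obtain ⟨ia, rfl⟩ := haS
    obtain ⟨ib, rfl⟩ := hbS
    have hg3 : 3 ≤ g := le_max_left _ _
    have hiab : ia < ib := hmono.lt_iff_lt.1 (by omega)
    have hterm : ρ ((n ib : ℝ) - (n ia : ℝ)) ≤ 1/2 := by
      have h1 := hsum ia {ib} (by
        intro k hk
        rw [Finset.mem_singleton] at hk
        rw [hk]; exact hiab)
      simpa using h1
    set m : ℝ := (n ib : ℝ) - (n ia : ℝ) with hmdef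
    have hgm : (g : ℝ) ≤ m := by
      have : (n ia : ℝ) + (g : ℝ) ≤ (n ib : ℝ) := by exact_mod_cast hab1
      rw [hmdef]; linarith
    have htg : t ≤ (g : ℝ) := by
      have h1 : t ≤ (⌈t⌉₊ : ℝ) := Nat.le_ceil t
      have h2 : (⌈t⌉₊ : ℕ) ≤ g := le_max_right _ _
      have h2' : ((⌈t⌉₊ : ℕ) : ℝ) ≤ (g : ℝ) := by exact_mod_cast h2
      linarith
    have htm : t ≤ m := le_trans htg hgm
    have hmle : m ≤ t + ((L:ℝ) + 4) := by
      have h1 : (n ib : ℝ) ≤ (n ia : ℝ) + (g : ℝ) + (L : ℝ) := by exact_mod_cast hab2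
      have h2 : (g : ℕ) ≤ 3 + ⌈t⌉₊ := by omega
      have h2' : (g : ℝ) ≤ 3 + (⌈t⌉₊ : ℝ) := by exact_mod_cast h2
      have h3 : (⌈t⌉₊ : ℝ) < t + 1 := Nat.ceil_lt_add_one ht
      rw [hmdef]; linarith
    have hkey := rho_le_of_le hpos hM hadm t m ht htm
    have hexp : Real.exp (|ω| * (m - t)) ≤ Real.exp (|ω| * ((L:ℝ) + 4)) := by
      refine Real.exp_le_exp.2 ?_
      have := abs_nonneg ω
      nlinarith
    have hrm0 : 0 ≤ ρ m := (hpos m (by linarith)).le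
    calc ρ t ≤ M * Real.exp (|ω| * (m - t)) * ρ m := hkey
      _ ≤ M * Real.exp (|ω| * ((L:ℝ) + 4)) * (1/2) := by
          rw [mul_assoc, mul_assoc]
          refine mul_le_mul_of_nonneg_left ?_ (by linarith)
          exact mul_le_mul hexp hterm hrm0 (Real.exp_pos _).le
end

section
/- Let X be a separable Banach space and (T_t)_{t≥0} a C0-semigroup on X such that there is a dense subset X_0 ⊆ X with t ↦ T_t x Pettis integrable on [0,∞) for every x ∈ X_0. Then the continuous linear operator R : X → X defined by Rx = ∫_0^1 T_t x dt has dense range; in particular, I − T_1 has dense range in X. -/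
open MeasureTheory Filter Set Topology ENNReal

lemma dense_of_dual_vanishing {X : Type*} [NormedAddCommGroup X] [NormedSpace ℝ X]
    (p : Set X) (h0 : (0 : X) ∈ p) (hadd : ∀ x ∈ p, ∀ y ∈ p, x + y ∈ p)
    (hsmul : ∀ (c : ℝ), ∀ x ∈ p, c • x ∈ p)
    (h : ∀ φ : X →L[ℝ] ℝ, (∀ y ∈ p, φ y = 0) → φ = 0) : Dense p := by
  by_contra hd
  rw [Dense] at hd
  push_neg at hd
  obtain ⟨x, hx⟩ := hd
  have hconv : Convex ℝ p := by
    intro a ha b hb s t _ _ _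
    exact hadd _ (hsmul s a ha) _ (hsmul t b hb)
  obtain ⟨f, u, hfx, hfb⟩ :=
    geometric_hahn_banach_point_closed hconv.closure isClosed_closure hx
  have hvan : ∀ y ∈ p, f y = 0 := by
    intro y hy
    by_contra hfy
    have hm : ((u - 1) / f y) • y ∈ closure p :=
      subset_closure (hsmul _ y hy)
    have := hfb _ hm
    rw [f.map_smul, smul_eq_mul, div_mul_cancel₀ _ hfy] at this
    linarith
  have hu : u < 0 := by
    have := hfb 0 (subset_closure h0)
    simpa using this
  have : f = 0 := h f hvan
  rw [this] at hfx
  simp at hfx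
  linarith

/-- Key analytic lemma: a continuous integrable function on `[0,∞)` all of whose
unit-window integrals vanish is identically zero on `[0,∞)`. -/
lemma zero_of_window (g : ℝ → ℝ) (hg : ContinuousOn g (Ici 0))
    (hint : IntegrableOn g (Ici 0)) (hw : ∀ s, 0 ≤ s → ∫ t in s..(s+1), g t = 0) :
    ∀ t, 0 ≤ t → g t = 0 := by
  have hii : ∀ a b : ℝ, 0 ≤ a → 0 ≤ b → IntervalIntegrable g volume a b := by
    intro a b ha hb
    apply ContinuousOn.intervalIntegrable
    apply hg.mono
    intro t ht
    rcases Set.mem_uIcc.1 ht with h | h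
    · exact le_trans ha h.1
    · exact le_trans hb h.1
  set G : ℝ → ℝ := fun u => ∫ t in (0:ℝ)..u, g t with hG
  set L : ℝ := ∫ t in Ioi (0:ℝ), g t with hLdef
  have hGadd : ∀ a b : ℝ, 0 ≤ a → 0 ≤ b → G a + (∫ t in a..b, g t) = G b := by
    intro a b ha hb
    exact intervalIntegral.integral_add_adjacent_intervals (hii 0 a le_rfl ha) (hii a b ha hb)
  have hL : Tendsto G atTop (𝓝 L) :=
    intervalIntegral_tendsto_integral_Ioi 0 (hint.mono_set Ioi_subset_Ici_self) tendsto_id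
  have hstep : ∀ s : ℝ, 0 ≤ s → G (s + 1) = G s := by
    intro s hs
    have := hGadd s (s + 1) hs (by linarith)
    rw [hw s hs] at this
    linarith
  have hiter : ∀ s : ℝ, 0 ≤ s → ∀ n : ℕ, G (s + n) = G s := by
    intro s hs n
    induction n with
    | zero => simp
    | succ n ih =>
      have hc : s + ((n:ℝ) + 1) = (s + n) + 1 := by ring
      push_cast
      rw [hc, hstep (s + n) (by positivity), ih]
  have hGL : ∀ s : ℝ, 0 ≤ s → G s = L := by
    intro s hs
    have h1 : Tendsto (fun n : ℕ => G (s + n)) atTop (𝓝 L) :=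
      hL.comp (tendsto_atTop_add_const_left _ s tendsto_natCast_atTop_atTop)
    have h2 : Tendsto (fun n : ℕ => G (s + n)) atTop (𝓝 (G s)) := by
      simp only [hiter s hs]
      exact tendsto_const_nhds
    exact tendsto_nhds_unique h2 h1
  have hL0 : L = 0 := by
    have := hGL 0 le_rfl
    simp [hG] at this
    exact this.symm
  have hint0 : ∀ a b : ℝ, 0 ≤ a → 0 ≤ b → ∫ t in a..b, g t = 0 := by
    intro a b ha hb
    have := hGadd a b ha hb
    rw [hGL a ha, hGL b hb, hL0] at this
    linarith
  -- now show pointwise vanishing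
  intro t0 ht0
  by_contra hne
  have hcw : ContinuousWithinAt g (Ici 0) t0 := hg t0 ht0
  have hev : ∀ᶠ t in 𝓝[Ici 0] t0, dist (g t) (g t0) < |g t0| / 2 := by
    have : (0:ℝ) < |g t0| / 2 := by positivity
    exact Metric.tendsto_nhds.1 hcw _ this
  obtain ⟨δ, hδ, hball⟩ := Metric.mem_nhdsWithin_iff.1 hev
  set b : ℝ := t0 + δ / 2 with hb
  have hlt : t0 < b := by simp [hb]; linarith
  have hmem : ∀ t ∈ Set.Ioo t0 b, dist (g t) (g t0) < |g t0| / 2 := by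
    intro t ht
    apply hball
    constructor
    · rw [Metric.mem_ball, Real.dist_eq, abs_of_pos (by linarith [ht.1] : (0:ℝ) < t - t0)]
      have := ht.2
      simp [hb] at this
      linarith
    · exact le_of_lt (lt_of_le_of_lt ht0 ht.1)
  rcases lt_or_gt_of_ne hne with hneg | hpos
  · -- g t0 < 0 : integral of -g positive
    have habs : |g t0| = -(g t0) := abs_of_neg hneg
    have hposint : (0:ℝ) < ∫ t in t0..b, -(g t) := by
      apply intervalIntegral.intervalIntegral_pos_of_pos_on
      · exact ((hii t0 b ht0 (by linarith)).neg)
      · intro t ht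
        have := hmem t ht
        rw [Real.dist_eq, habs] at this
        have := abs_lt.1 this
        linarith [this.2]
      · exact hlt
    rw [intervalIntegral.integral_neg, hint0 t0 b ht0 (by linarith)] at hposint
    simp at hposint
  · have habs : |g t0| = g t0 := abs_of_pos hpos
    have hposint : (0:ℝ) < ∫ t in t0..b, g t := by
      apply intervalIntegral.intervalIntegral_pos_of_pos_on
      · exact hii t0 b ht0 (by linarith)
      · intro t ht
        have := hmem t ht
        rw [Real.dist_eq, habs] at this
        have := abs_lt.1 this
        linarith [this.1]
      · exact hlt
    rw [hint0 t0 b ht0 (by linarith)] at hposint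
    simp at hposint


lemma window_zero_of_periodic (g : ℝ → ℝ) (hg : ContinuousOn g (Ici 0))
    (hint : IntegrableOn g (Ici 0)) (hper : ∀ t, 0 ≤ t → g (t + 1) = g t) :
    ∀ s, 0 ≤ s → ∫ t in s..(s+1), g t = 0 := by
  have hii : ∀ a b : ℝ, 0 ≤ a → 0 ≤ b → IntervalIntegrable g volume a b := by
    intro a b ha hb
    apply ContinuousOn.intervalIntegrable
    apply hg.mono
    intro t ht
    rcases Set.mem_uIcc.1 ht with h | h
    · exact le_trans ha h.1
    · exact le_trans hb h.1
  set G : ℝ → ℝ := fun u => ∫ t in (0:ℝ)..u, g t with hG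
  set L : ℝ := ∫ t in Ioi (0:ℝ), g t with hLdef
  have hGadd : ∀ a b : ℝ, 0 ≤ a → 0 ≤ b → G a + (∫ t in a..b, g t) = G b := by
    intro a b ha hb
    exact intervalIntegral.integral_add_adjacent_intervals (hii 0 a le_rfl ha) (hii a b ha hb)
  have hL : Tendsto G atTop (𝓝 L) :=
    intervalIntegral_tendsto_integral_Ioi 0 (hint.mono_set Ioi_subset_Ici_self) tendsto_id
  have hshift : ∀ s : ℝ, 0 ≤ s → (∫ t in (s+1)..(s+2), g t) = ∫ t in s..(s+1), g t := by
    intro s hs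
    have h1 : (∫ t in s..(s+1), g (t + 1)) = ∫ t in (s+1)..(s+1+1), g t :=
      intervalIntegral.integral_comp_add_right g 1
    have h2 : (∫ t in s..(s+1), g (t + 1)) = ∫ t in s..(s+1), g t := by
      apply intervalIntegral.integral_congr
      intro t ht
      rw [Set.uIcc_of_le (by linarith : s ≤ s + 1)] at ht
      exact hper t (le_trans hs ht.1)
    have h3 : s + 1 + 1 = s + 2 := by ring
    rw [h3] at h1
    rw [← h1, h2]
  have hiter : ∀ s : ℝ, 0 ≤ s → ∀ n : ℕ,
      (∫ t in (s+n)..(s+n+1), g t) = ∫ t in s..(s+1), g t := by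
    intro s hs n
    induction n with
    | zero => simp
    | succ n ih =>
      push_cast
      have e1 : s + ((n:ℝ) + 1) = s + (n:ℝ) + 1 := by ring
      have hc3 : s + (n:ℝ) + 1 + 1 = s + (n:ℝ) + 2 := by ring
      rw [e1, hc3, hshift (s + n) (by positivity), ih]
  intro s hs
  have hWn : ∀ n : ℕ, (∫ t in s..(s+1), g t) = G (s+n+1) - G (s+n) := by
    intro n
    have := hGadd (s+n) (s+n+1) (by positivity) (by positivity)
    rw [hiter s hs n] at this
    linarith
  have t1 : Tendsto (fun n : ℕ => G (s + n + 1)) atTop (𝓝 L) := by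
    have : Tendsto (fun n : ℕ => s + (n:ℝ) + 1) atTop atTop := by
      apply tendsto_atTop_add_const_right
      exact tendsto_atTop_add_const_left _ s tendsto_natCast_atTop_atTop
    exact hL.comp this
  have t2 : Tendsto (fun n : ℕ => G (s + n)) atTop (𝓝 L) :=
    hL.comp (tendsto_atTop_add_const_left _ s tendsto_natCast_atTop_atTop)
  have t3 : Tendsto (fun n : ℕ => G (s + n + 1) - G (s + n)) atTop (𝓝 (L - L)) := t1.sub t2
  have t4 : Tendsto (fun n : ℕ => G (s + n + 1) - G (s + n)) atTop
      (𝓝 (∫ t in s..(s+1), g t)) := by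
    simp only [← hWn]
    exact tendsto_const_nhds
  have := tendsto_nhds_unique t4 t3
  rw [this]; ring

theorem statement17 {X : Type*} [NormedAddCommGroup X] [NormedSpace ℝ X]
    [CompleteSpace X] [TopologicalSpace.SeparableSpace X]
    (T : ℝ → X →L[ℝ] X) (hT : IsC0Semigroup T)
    (X0 : Set X) (hX0 : Dense X0)
    (hP : ∀ x ∈ X0, PettisIntegrableOnIci ℝ (fun t => T t x)) :
    Dense (Set.range (fun x : X => ∫ t in (0 : ℝ)..1, T t x)) ∧
    Dense (Set.range (fun x : X => x - T 1 x)) := by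
  obtain ⟨hT0, hTsemi, hTcont⟩ := hT
  have hii : ∀ x : X, IntervalIntegrable (fun t => T t x) volume 0 1 := by
    intro x
    apply ContinuousOn.intervalIntegrable
    apply (hTcont x).mono
    intro t ht
    rw [Set.uIcc_of_le (by norm_num : (0:ℝ) ≤ 1)] at ht
    exact ht.1
  -- dual function continuity and integrability for x ∈ X0
  have hgc : ∀ (φ : X →L[ℝ] ℝ) (x : X), ContinuousOn (fun t => φ (T t x)) (Ici 0) :=
    fun φ x => φ.continuous.comp_continuousOn (hTcont x)
  have hgint : ∀ (φ : X →L[ℝ] ℝ), ∀ x ∈ X0, IntegrableOn (fun t => φ (T t x)) (Ici 0) :=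
    fun φ x hx => (hP x hx).1 φ
  -- key identity for part 1
  have key : ∀ (φ : X →L[ℝ] ℝ) (x : X) (s : ℝ), 0 ≤ s →
      (∫ t in s..(s+1), φ (T t x)) = φ (∫ t in (0:ℝ)..1, T t (T s x)) := by
    intro φ x s hs
    have h1 : (∫ t in (0:ℝ)..1, φ (T (t + s) x)) = ∫ t in (0+s)..(1+s), φ (T t x) :=
      intervalIntegral.integral_comp_add_right (fun t => φ (T t x)) s
    have e1 : (0:ℝ) + s = s := zero_add s
    have e2 : (1:ℝ) + s = s + 1 := add_comm 1 s
    rw [e1, e2] at h1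
    have h2 : (∫ t in (0:ℝ)..1, φ (T (t + s) x)) = ∫ t in (0:ℝ)..1, φ (T t (T s x)) := by
      apply intervalIntegral.integral_congr
      intro t ht
      rw [Set.uIcc_of_le (by norm_num : (0:ℝ) ≤ 1)] at ht
      show φ (T (t + s) x) = φ (T t (T s x))
      rw [hTsemi t s ht.1 hs]
      rfl
    have h3 : (∫ t in (0:ℝ)..1, φ (T t (T s x))) = φ (∫ t in (0:ℝ)..1, T t (T s x)) :=
      φ.intervalIntegral_comp_comm (hii (T s x))
    rw [← h1, h2, h3]
  constructor
  · -- Part 1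
    apply dense_of_dual_vanishing
    · exact ⟨0, by simp⟩
    · rintro _ ⟨a, rfl⟩ _ ⟨b, rfl⟩
      refine ⟨a + b, ?_⟩
      simp only [map_add]
      exact intervalIntegral.integral_add (hii a) (hii b)
    · rintro c _ ⟨a, rfl⟩
      refine ⟨c • a, ?_⟩
      simp only [ContinuousLinearMap.map_smul]
      exact intervalIntegral.integral_smul c _
    · intro φ hφ
      have hzero : ∀ x ∈ X0, φ x = 0 := by
        intro x hx
        have hw : ∀ s, 0 ≤ s → ∫ t in s..(s+1), φ (T t x) = 0 := by
          intro s hs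
          rw [key φ x s hs]
          exact hφ _ ⟨T s x, rfl⟩
        have := zero_of_window (fun t => φ (T t x)) (hgc φ x) (hgint φ x hx) hw 0 le_rfl
        simp only [hT0, ContinuousLinearMap.one_apply] at this
        exact this
      have hfun : (φ : X → ℝ) = fun _ => (0:ℝ) :=
        Continuous.ext_on hX0 φ.continuous continuous_const hzero
      ext z
      exact congrFun hfun z
  · -- Part 2
    apply dense_of_dual_vanishing
    · exact ⟨0, by simp⟩
    · rintro _ ⟨a, rfl⟩ _ ⟨b, rfl⟩
      refine ⟨a + b, ?_⟩
      simp only [map_add]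
      abel
    · rintro c _ ⟨a, rfl⟩
      refine ⟨c • a, ?_⟩
      show c • a - T 1 (c • a) = c • (a - T 1 a)
      rw [ContinuousLinearMap.map_smul, smul_sub]
    · intro φ hφ
      have hper0 : ∀ y : X, φ (T 1 y) = φ y := by
        intro y
        have := hφ _ ⟨y, rfl⟩
        rw [map_sub] at this
        linarith
      have hzero : ∀ x ∈ X0, φ x = 0 := by
        intro x hx
        have hper : ∀ t, 0 ≤ t → φ (T (t + 1) x) = φ (T t x) := by
          intro t ht
          rw [add_comm t 1, hTsemi 1 t zero_le_one ht]
          exact hper0 (T t x)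
        have hw := window_zero_of_periodic (fun t => φ (T t x)) (hgc φ x) (hgint φ x hx) hper
        have := zero_of_window (fun t => φ (T t x)) (hgc φ x) (hgint φ x hx) hw 0 le_rfl
        simp only [hT0, ContinuousLinearMap.one_apply] at this
        exact this
      have hfun : (φ : X → ℝ) = fun _ => (0:ℝ) :=
        Continuous.ext_on hX0 φ.continuous continuous_const hzero
      ext z
      exact congrFun hfun z
end
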